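/- arXiv:1101.2587 — 5 statements merged into one kernel-verified Lean document; each statement's English description precedes it below -/
import Mathlib

section
/- Let n, m be positive integers with m < n. Let E ⊆ ℝⁿ be an m-rectifiable set (i.e., E is ℋᵐ-measurable, ℋᵐ(E) > 0, and there exist countably many C¹ embeddings fᵢ : ℝᵐ → ℝⁿ such that ℋᵐ(E \ ⋃ᵢ fᵢ(ℝᵐ)) = 0). Assume E is not essentially m-flat, i.e., there is no affine m-plane T ⊆ ℝⁿ with ℋᵐ(E \ T) = 0. Then for ℋᵐ-almost every x ∈ ℝⁿ, the radial projection π_x(E \ {x}) has positive m-dimensional Hausdorff measure, where π_x(y) = (y − x)/|y − x|. -/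
open MeasureTheory Metric Set
open scoped ENNReal NNReal

/-- The radial projection from `x`, mapping `y ≠ x` to `(y - x)/‖y - x‖ ∈ S^{n-1}`. -/
noncomputable def radialProj {n : ℕ} (x y : EuclideanSpace ℝ (Fin n)) : EuclideanSpace ℝ (Fin n) :=
  ‖y - x‖⁻¹ • (y - x)

/-- A `C¹` embedding: continuously differentiable and a homeomorphism onto its image. -/
def IsC1Embedding {m n : ℕ} (f : EuclideanSpace ℝ (Fin m) → EuclideanSpace ℝ (Fin n)) : Prop :=
  ContDiff ℝ 1 f ∧ Topology.IsEmbedding f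

/-- `T` is an affine `k`-plane: a translate of a `k`-dimensional linear subspace. -/
def IsAffinePlane {n : ℕ} (k : ℕ) (T : Set (EuclideanSpace ℝ (Fin n))) : Prop :=
  ∃ (W : Submodule ℝ (EuclideanSpace ℝ (Fin n))) (v : EuclideanSpace ℝ (Fin n)),
    Module.finrank ℝ W = k ∧ T = (fun w => v + w) '' (W : Set (EuclideanSpace ℝ (Fin n)))

/-- `E` is `m`-rectifiable: `ℋᵐ`-measurable, of positive `ℋᵐ` measure, and covered up to an
`ℋᵐ`-null set by countably many `C¹` embeddings of `ℝᵐ` into `ℝⁿ`. -/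
def IsRectifiableSet (m n : ℕ) (E : Set (EuclideanSpace ℝ (Fin n))) : Prop :=
  NullMeasurableSet E (μH[(m : ℝ)]) ∧ 0 < μH[(m : ℝ)] E ∧
  ∃ f : ℕ → (EuclideanSpace ℝ (Fin m) → EuclideanSpace ℝ (Fin n)),
    (∀ i, IsC1Embedding (f i)) ∧ μH[(m : ℝ)] (E \ ⋃ i, Set.range (f i)) = 0


-- ### Auxiliary lemmas ###

lemma euclid_norm_le_sum {k : ℕ} (v : EuclideanSpace ℝ (Fin k)) : ‖v‖ ≤ ∑ i, |v i| := by
  rw [EuclideanSpace.norm_eq]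
  have h1 : ∑ i, ‖v i‖ ^ 2 ≤ (∑ i, |v i|) ^ 2 := by
    have := Finset.sum_sq_le_sq_sum_of_nonneg (s := (Finset.univ : Finset (Fin k)))
      (f := fun i => |v i|) (fun i _ => abs_nonneg _)
    simpa [Real.norm_eq_abs] using this
  calc Real.sqrt (∑ i, ‖v i‖ ^ 2) ≤ Real.sqrt ((∑ i, |v i|) ^ 2) := Real.sqrt_le_sqrt h1
  _ = ∑ i, |v i| := Real.sqrt_sq (by positivity)

lemma euclid_coord_le_norm {k : ℕ} (v : EuclideanSpace ℝ (Fin k)) (i : Fin k) : |v i| ≤ ‖v‖ := by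
  rw [EuclideanSpace.norm_eq]
  have h1 : |v i| = Real.sqrt (‖v i‖ ^ 2) := by
    rw [Real.sqrt_sq (norm_nonneg _), Real.norm_eq_abs]
  rw [h1]
  apply Real.sqrt_le_sqrt
  exact Finset.single_le_sum (f := fun j => ‖v j‖ ^ 2) (fun j _ => by positivity) (Finset.mem_univ i)

lemma grid_cover (k : ℕ) {ρ δ : ℝ} (hρ : 0 ≤ ρ) (hδ : 0 < δ) :
    ∃ F : Finset (EuclideanSpace ℝ (Fin k)),
      (∀ p : EuclideanSpace ℝ (Fin k), ‖p‖ ≤ ρ → ∃ c ∈ F, dist p c ≤ δ) ∧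
      (F.card : ℝ) * δ ^ k ≤ (2 * (k + 1) * ρ + 5 * δ) ^ k := by
  classical
  set δ' : ℝ := δ / (k + 1) with hδ'def
  have hk1 : (0:ℝ) < (k:ℝ) + 1 := by positivity
  have hδ'pos : 0 < δ' := by positivity
  set N : ℤ := ⌈ρ / δ'⌉ + 1 with hNdef
  have hN1 : (1:ℤ) ≤ N := by
    have : (0:ℤ) ≤ ⌈ρ / δ'⌉ := Int.ceil_nonneg (by positivity)
    omega
  have hNρ : (N : ℝ) ≤ ρ / δ' + 2 := by
    have := Int.ceil_lt_add_one (ρ / δ')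
    push_cast [hNdef]
    linarith
  set Fz : Finset (Fin k → ℤ) := Fintype.piFinset fun _ => Finset.Icc (-N) N with hFz
  set F : Finset (EuclideanSpace ℝ (Fin k)) :=
    Fz.image (fun z => (WithLp.toLp 2 (fun i => δ' * (z i : ℝ)) : EuclideanSpace ℝ (Fin k))) with hF
  refine ⟨F, ?_, ?_⟩
  · intro p hp
    set z : Fin k → ℤ := fun i => round (p i / δ') with hzdef
    have hzmem : z ∈ Fz := by
      rw [hFz, Fintype.mem_piFinset]
      intro i
      rw [Finset.mem_Icc]
      have h2 : |p i / δ'| ≤ ρ / δ' := by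
        rw [abs_div, abs_of_pos hδ'pos]
        gcongr
        exact (euclid_coord_le_norm p i).trans hp
      have h3 : |(z i : ℝ)| ≤ ρ / δ' + 1/2 := by
        have h4 := abs_sub_round (p i / δ')
        have h5 : |(z i : ℝ) - p i / δ'| ≤ 1/2 := by
          rw [abs_sub_comm]; exact h4
        have := abs_sub_abs_le_abs_sub ((z i : ℝ)) (p i / δ')
        linarith
      have h6 : |(z i : ℝ)| ≤ (N : ℝ) := by
        have := Int.le_ceil (ρ / δ')
        have : ρ / δ' + 1/2 ≤ (N:ℝ) := by
          push_cast [hNdef]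
          linarith
        linarith
      have h7 : |z i| ≤ N := by
        exact_mod_cast (by rwa [← Int.cast_abs] at h6 : ((|z i| : ℤ) : ℝ) ≤ (N:ℝ))
      exact abs_le.mp h7
    set c : EuclideanSpace ℝ (Fin k) := WithLp.toLp 2 (fun i => δ' * (z i : ℝ)) with hcdef
    refine ⟨c, Finset.mem_image_of_mem _ hzmem, ?_⟩
    rw [dist_eq_norm]
    have hcoord : ∀ i, |p i - δ' * z i| ≤ δ' / 2 := by
      intro i
      have hh := abs_sub_round (p i / δ')
      have h8 : p i - δ' * z i = δ' * (p i / δ' - z i) := by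
        field_simp
      rw [h8, abs_mul, abs_of_pos hδ'pos]
      calc δ' * |p i / δ' - ↑(z i)| ≤ δ' * (1/2) := by
            exact mul_le_mul_of_nonneg_left hh hδ'pos.le
        _ = δ' / 2 := by ring
    calc ‖p - c‖ ≤ ∑ i, |(p - c) i| := euclid_norm_le_sum _
      _ ≤ ∑ _i : Fin k, δ' / 2 := by
          apply Finset.sum_le_sum
          intro i _
          have : (p - c) i = p i - δ' * z i := rfl
          rw [this]
          exact hcoord i
      _ = k * (δ' / 2) := by simp [Finset.sum_const, mul_comm]
      _ ≤ δ := by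
          have heq : (k:ℝ) * (δ' / 2) = δ * ((k:ℝ) / (2 * ((k:ℝ)+1))) := by
            rw [hδ'def]; field_simp
          rw [heq]
          have h9 : (k:ℝ) / (2 * ((k:ℝ)+1)) ≤ 1 := by
            rw [div_le_one (by positivity)]
            linarith
          nlinarith [hδ.le]
  · have h3 : ((Finset.Icc (-N) N).card : ℝ) = 2*(N:ℝ)+1 := by
      rw [Int.card_Icc]
      have h0 : N + 1 - -N = 2*N+1 := by ring
      rw [h0]
      rw [show ((((2*N+1).toNat : ℕ)) : ℝ) = (((2*N+1).toNat : ℤ) : ℝ) by push_cast; ring,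
        Int.toNat_of_nonneg (by omega)]
      push_cast; ring
    have hcard : (F.card : ℝ) ≤ (2*(N:ℝ)+1) ^ k := by
      have h1 : F.card ≤ Fz.card := Finset.card_image_le
      have h2 : Fz.card = ((Finset.Icc (-N) N).card) ^ k := by
        rw [hFz, Fintype.card_piFinset]
        simp
      calc (F.card : ℝ) ≤ (Fz.card : ℝ) := by exact_mod_cast h1
        _ = (((Finset.Icc (-N) N).card : ℝ)) ^ k := by rw [h2]; push_cast; ring
        _ = (2*(N:ℝ)+1) ^ k := by rw [h3]
    have hstep : (2*(N:ℝ)+1) * δ' ≤ 2 * ρ + 5 * δ' := by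
      have h9 : (2 * (N:ℝ) + 1) * δ' ≤ (2 * (ρ/δ') + 5) * δ' := by
        apply mul_le_mul_of_nonneg_right _ hδ'pos.le
        linarith
      calc (2 * (N:ℝ) + 1) * δ' ≤ (2 * (ρ/δ') + 5) * δ' := h9
        _ = 2 * ρ + 5 * δ' := by field_simp
    have hδeq : δ = ((k:ℝ) + 1) * δ' := by
      rw [hδ'def]; field_simp
    have hpos2N : (0:ℝ) ≤ 2*(N:ℝ)+1 := by
      have : (1:ℝ) ≤ (N:ℝ) := by exact_mod_cast hN1
      linarith
    calc (F.card : ℝ) * δ ^ k ≤ (2*(N:ℝ)+1) ^ k * δ ^ k := by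
          apply mul_le_mul_of_nonneg_right hcard (by positivity)
      _ = ((2*(N:ℝ)+1) * δ) ^ k := by rw [mul_pow]
      _ ≤ (2 * (k + 1) * ρ + 5 * δ) ^ k := by
          apply pow_le_pow_left₀ (by positivity)
          calc (2*(N:ℝ)+1) * δ = ((2*(N:ℝ)+1) * δ') * ((k:ℝ) + 1) := by
                rw [hδeq]; ring
            _ ≤ (2 * ρ + 5 * δ') * ((k:ℝ) + 1) := by
                apply mul_le_mul_of_nonneg_right hstep hk1.le
            _ = 2 * ((k:ℝ)+1) * ρ + 5 * (((k:ℝ)+1) * δ') := by ring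
            _ = 2 * ((k:ℝ)+1) * ρ + 5 * δ := by rw [← hδeq]

lemma subspace_cover {n : ℕ} (W : Submodule ℝ (EuclideanSpace ℝ (Fin n))) (k : ℕ)
    (hk : Module.finrank ℝ W ≤ k) {ρ δ : ℝ} (hρ : 0 ≤ ρ) (hδ : 0 < δ) :
    ∃ F : Finset (EuclideanSpace ℝ (Fin n)),
      (∀ w : EuclideanSpace ℝ (Fin n), w ∈ W → ‖w‖ ≤ ρ → ∃ c ∈ F, dist w c ≤ δ) ∧
      (F.card : ℝ) * δ ^ k ≤ (2 * (k + 1) * ρ + 5 * δ) ^ k := by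
  classical
  set k' := Module.finrank ℝ W with hk'
  set e : W ≃ₗᵢ[ℝ] EuclideanSpace ℝ (Fin k') := (stdOrthonormalBasis ℝ W).repr with he
  obtain ⟨F₀, hcov, hcard⟩ := grid_cover k' hρ hδ
  set F : Finset (EuclideanSpace ℝ (Fin n)) := F₀.image (fun u => ((e.symm u : W) : EuclideanSpace ℝ (Fin n))) with hF
  refine ⟨F, ?_, ?_⟩
  · intro w hw hwn
    obtain ⟨c₀, hc₀, hd⟩ := hcov (e ⟨w, hw⟩) (by rw [e.norm_map]; exact hwn)
    refine ⟨((e.symm c₀ : W) : EuclideanSpace ℝ (Fin n)), Finset.mem_image_of_mem _ hc₀, ?_⟩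
    have h1 : dist w ((e.symm c₀ : W) : EuclideanSpace ℝ (Fin n))
        = dist (⟨w, hw⟩ : W) (e.symm c₀) := rfl
    have h2 : dist (⟨w, hw⟩ : W) (e.symm c₀) = dist (e ⟨w, hw⟩) c₀ := by
      have h3 := e.symm.dist_map (e ⟨w, hw⟩) c₀
      simpa using h3
    rw [h1, h2]; exact hd
  · have h1 : (F.card : ℝ) ≤ (F₀.card : ℝ) := by exact_mod_cast Finset.card_image_le
    set B : ℝ := 2 * (k + 1) * ρ + 5 * δ with hB
    have hδB : δ ≤ B := by
      have : (0:ℝ) ≤ 2 * ((k:ℝ) + 1) * ρ := by positivity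
      rw [hB]; nlinarith [hδ.le]
    have hBpos : (0:ℝ) ≤ B := le_trans hδ.le hδB
    have hb : (2 * ((k':ℝ) + 1) * ρ + 5 * δ) ≤ B := by
      rw [hB]
      have h2 : (k' : ℝ) ≤ (k : ℝ) := by exact_mod_cast hk
      nlinarith
    calc (F.card : ℝ) * δ ^ k = ((F.card : ℝ) * δ ^ k') * δ ^ (k - k') := by
          rw [mul_assoc, ← pow_add]
          congr 2
          omega
      _ ≤ ((F₀.card : ℝ) * δ ^ k') * δ ^ (k - k') := by
          apply mul_le_mul_of_nonneg_right _ (by positivity)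
          exact mul_le_mul_of_nonneg_right h1 (by positivity)
      _ ≤ B ^ k' * B ^ (k - k') := by
          apply mul_le_mul (hcard.trans (pow_le_pow_left₀ (by positivity) hb k'))
            (pow_le_pow_left₀ hδ.le hδB _) (by positivity) (by positivity)
      _ = B ^ k := by rw [← pow_add]; congr 1; omega

lemma hm_le_of_antilip {m n : ℕ} {d : ℝ} (hd : 0 ≤ d) {A : Set (EuclideanSpace ℝ (Fin m))}
    {g : EuclideanSpace ℝ (Fin m) → EuclideanSpace ℝ (Fin n)} {K : ℝ≥0}
    (hg : ∀ a ∈ A, ∀ b ∈ A, dist a b ≤ K * dist (g a) (g b)) :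
    μH[d] A ≤ (K : ℝ≥0∞) ^ d * μH[d] (g '' A) := by
  classical
  have hinj : ∀ a ∈ A, ∀ b ∈ A, g a = g b → a = b := by
    intro a ha b hb h
    have h2 := hg a ha b hb
    rw [h, dist_self, mul_zero] at h2
    exact dist_le_zero.mp h2
  set h := Function.invFunOn g A with hh
  have h1 : ∀ z ∈ g '' A, h z ∈ A ∧ g (h z) = z := by
    intro z hz
    obtain ⟨a, ha, rfl⟩ := hz
    exact ⟨Function.invFunOn_mem ⟨a, ha, rfl⟩, Function.invFunOn_eq ⟨a, ha, rfl⟩⟩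
  have hlip : LipschitzOnWith K h (g '' A) := by
    apply LipschitzOnWith.of_dist_le_mul
    intro z hz w hw
    have hz' := h1 z hz
    have hw' := h1 w hw
    calc dist (h z) (h w) ≤ K * dist (g (h z)) (g (h w)) := hg _ hz'.1 _ hw'.1
      _ = K * dist z w := by rw [hz'.2, hw'.2]
  have himg : A ⊆ h '' (g '' A) := by
    intro a ha
    refine ⟨g a, mem_image_of_mem _ ha, ?_⟩
    have := h1 (g a) (mem_image_of_mem _ ha)
    exact hinj _ this.1 _ ha this.2
  calc μH[d] A ≤ μH[d] (h '' (g '' A)) := measure_mono himg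
    _ ≤ (K : ℝ≥0∞) ^ d * μH[d] (g '' A) := hlip.hausdorffMeasure_image_le hd

lemma hm_affine_null {n : ℕ} {d : ℝ} (Q : AffineSubspace ℝ (EuclideanSpace ℝ (Fin n)))
    (hd : (Module.finrank ℝ Q.direction : ℝ) < d) :
    μH[d] (Q : Set (EuclideanSpace ℝ (Fin n))) = 0 := by
  rcases (Q : Set (EuclideanSpace ℝ (Fin n))).eq_empty_or_nonempty with hQ | ⟨v, hv⟩
  · simp [hQ]
  · set W := Q.direction with hW
    set k := Module.finrank ℝ W with hk
    set e : EuclideanSpace ℝ (Fin k) ≃ₗᵢ[ℝ] W := (stdOrthonormalBasis ℝ W).repr.symm with he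
    set φ : EuclideanSpace ℝ (Fin k) → EuclideanSpace ℝ (Fin n) :=
      fun u => v + ((e u : W) : EuclideanSpace ℝ (Fin n)) with hφ
    have hlip : LipschitzWith 1 φ := by
      apply LipschitzWith.of_dist_le_mul
      intro a b
      have h1 : dist (φ a) (φ b) = dist ((e a : W) : EuclideanSpace ℝ (Fin n)) ((e b : W)) := by
        rw [hφ]; simp [dist_eq_norm]
      rw [h1]
      have h2 : dist ((e a : W) : EuclideanSpace ℝ (Fin n)) ((e b : W)) = dist (e a) (e b) := rfl
      rw [h2, e.dist_map]
      simp
  -- subset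
    have hsub : (Q : Set (EuclideanSpace ℝ (Fin n))) ⊆ φ '' univ := by
      intro q hq
      have hmem : q - v ∈ W := by
        have := AffineSubspace.vsub_mem_direction hq hv
        simpa using this
      refine ⟨e.symm ⟨q - v, hmem⟩, trivial, ?_⟩
      rw [hφ]
      simp
    have h0 : μH[d] (univ : Set (EuclideanSpace ℝ (Fin k))) = 0 := by
      have hlt : (Module.finrank ℝ (EuclideanSpace ℝ (Fin k)) : ℝ) < d := by
        rwa [finrank_euclideanSpace_fin]
      rw [Real.hausdorffMeasure_of_finrank_lt hlt]
      simp
    have hd0 : 0 ≤ d := le_trans (by positivity) hd.le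
    have hle : μH[d] (Q : Set (EuclideanSpace ℝ (Fin n))) ≤ 0 := by
      calc μH[d] (Q : Set (EuclideanSpace ℝ (Fin n))) ≤ μH[d] (φ '' univ) := measure_mono hsub
        _ ≤ ((1 : ℝ≥0) : ℝ≥0∞) ^ d * μH[d] (univ : Set (EuclideanSpace ℝ (Fin k))) :=
            hlip.hausdorffMeasure_image_le hd0 univ
        _ = 0 := by rw [h0, mul_zero]
    exact le_antisymm hle zero_le

lemma radialProj_contDiffAt {n : ℕ} {x y : EuclideanSpace ℝ (Fin n)} (hxy : y ≠ x) :
    ContDiffAt ℝ 1 (radialProj x) y := by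
  have hy : y - x ≠ 0 := sub_ne_zero.mpr hxy
  have h1 : ContDiffAt ℝ 1 (fun u : EuclideanSpace ℝ (Fin n) => u - x) y :=
    contDiffAt_id.sub contDiffAt_const
  have h2 : ContDiffAt ℝ 1 (fun u : EuclideanSpace ℝ (Fin n) => ‖u - x‖) y :=
    (contDiffAt_norm ℝ hy).comp y h1
  exact (h2.inv (norm_ne_zero_iff.mpr hy)).smul h1

lemma radialProj_fderiv_ker {n : ℕ} {x y : EuclideanSpace ℝ (Fin n)} (hxy : y ≠ x)
    {v : EuclideanSpace ℝ (Fin n)} (hv : fderiv ℝ (radialProj x) y v = 0) :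
    ∃ t : ℝ, v = t • (y - x) := by
  have hy : y - x ≠ 0 := sub_ne_zero.mpr hxy
  have h1 : ContDiffAt ℝ 1 (fun u : EuclideanSpace ℝ (Fin n) => u - x) y :=
    contDiffAt_id.sub contDiffAt_const
  have h2 : ContDiffAt ℝ 1 (fun u : EuclideanSpace ℝ (Fin n) => ‖u - x‖) y :=
    (contDiffAt_norm ℝ hy).comp y h1
  have hρ : DifferentiableAt ℝ (radialProj x) y :=
    (radialProj_contDiffAt hxy).differentiableAt one_ne_zero
  have hN : DifferentiableAt ℝ (fun u : EuclideanSpace ℝ (Fin n) => ‖u - x‖) y :=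
    h2.differentiableAt one_ne_zero
  have hΦ : (fun u : EuclideanSpace ℝ (Fin n) => ‖u - x‖ • radialProj x u)
      = fun u => u - x := by
    funext u
    by_cases hu : u = x
    · simp [radialProj, hu]
    · have hne : ‖u - x‖ ≠ 0 := norm_ne_zero_iff.mpr (sub_ne_zero.mpr hu)
      rw [radialProj, smul_smul, mul_inv_cancel₀ hne, one_smul]
  have hder : HasFDerivAt (fun u : EuclideanSpace ℝ (Fin n) => ‖u - x‖ • radialProj x u)
      (‖y - x‖ • fderiv ℝ (radialProj x) y
        + (fderiv ℝ (fun u : EuclideanSpace ℝ (Fin n) => ‖u - x‖) y).smulRight (radialProj x y)) y :=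
    hN.hasFDerivAt.smul hρ.hasFDerivAt
  rw [hΦ] at hder
  have hder2 : HasFDerivAt (fun u : EuclideanSpace ℝ (Fin n) => u - x)
      (ContinuousLinearMap.id ℝ (EuclideanSpace ℝ (Fin n))) y :=
    (hasFDerivAt_id y).sub_const x
  have huniq := hder.unique hder2
  have happ := congrArg (fun L : EuclideanSpace ℝ (Fin n) →L[ℝ] EuclideanSpace ℝ (Fin n) => L v) huniq
  simp only [ContinuousLinearMap.add_apply, ContinuousLinearMap.coe_smul',
    Pi.smul_apply, ContinuousLinearMap.smulRight_apply, ContinuousLinearMap.id_apply] at happ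
  rw [hv, smul_zero, zero_add] at happ
  refine ⟨(fderiv ℝ (fun u : EuclideanSpace ℝ (Fin n) => ‖u - x‖) y v) * ‖y - x‖⁻¹, ?_⟩
  conv_lhs => rw [← happ]
  rw [radialProj, smul_smul]

lemma exists_antilip_nbhd {m n : ℕ} {g : EuclideanSpace ℝ (Fin m) → EuclideanSpace ℝ (Fin n)}
    {p : EuclideanSpace ℝ (Fin m)}
    (hg : ContDiffAt ℝ 1 g p) (hinj : Function.Injective (fderiv ℝ g p)) :
    ∃ u : ℝ, 0 < u ∧ ∃ K : ℝ≥0,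
      ∀ a ∈ ball p u, ∀ b ∈ ball p u, dist a b ≤ K * dist (g a) (g b) := by
  obtain ⟨K₀, hK₀pos, hK₀⟩ := LinearMap.exists_antilipschitzWith
    ((fderiv ℝ g p : EuclideanSpace ℝ (Fin m) →L[ℝ] EuclideanSpace ℝ (Fin n))
      : EuclideanSpace ℝ (Fin m) →ₗ[ℝ] EuclideanSpace ℝ (Fin n))
    (LinearMap.ker_eq_bot.mpr (by exact hinj))
  have hK₀R : (0:ℝ) < (K₀ : ℝ) := hK₀pos
  have hstrict := hg.hasStrictFDerivAt one_ne_zero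
  have hlittle := hstrict.isLittleO
  have hev := hlittle.def (show (0:ℝ) < (2 * (K₀:ℝ))⁻¹ by positivity)
  rw [Metric.eventually_nhds_iff] at hev
  obtain ⟨ε, hε, hball⟩ := hev
  refine ⟨ε / 2, by positivity, 2 * K₀, ?_⟩
  intro a ha b hb
  have hab : dist ((a, b) : (EuclideanSpace ℝ (Fin m)) × (EuclideanSpace ℝ (Fin m))) (p, p) < ε := by
    rw [Prod.dist_eq]
    rw [mem_ball] at ha hb
    refine max_lt (lt_of_lt_of_le ha (by linarith)) (lt_of_lt_of_le hb (by linarith))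
  have h3 := hball hab
  simp only [Real.norm_eq_abs] at h3
  -- h3 : ‖g a - g b - (fderiv ℝ g p) (a - b)‖ ≤ (2 K₀)⁻¹ * ‖a - b‖
  have h4 : ‖a - b‖ ≤ (K₀ : ℝ) * ‖(fderiv ℝ g p) (a - b)‖ := by
    have := hK₀.le_mul_dist (a - b) 0
    simpa [dist_eq_norm] using this
  have h5 : ‖(fderiv ℝ g p) (a - b)‖ ≤ ‖g a - g b‖ + (2 * (K₀:ℝ))⁻¹ * ‖a - b‖ := by
    have h6 : ‖(fderiv ℝ g p) (a - b)‖
        ≤ ‖g a - g b‖ + ‖g a - g b - (fderiv ℝ g p) (a - b)‖ := by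
      have h := norm_sub_le (g a - g b) (g a - g b - (fderiv ℝ g p) (a - b))
      simpa using h
    calc ‖(fderiv ℝ g p) (a - b)‖
        ≤ ‖g a - g b‖ + ‖g a - g b - (fderiv ℝ g p) (a - b)‖ := h6
      _ ≤ ‖g a - g b‖ + (2 * (K₀:ℝ))⁻¹ * ‖a - b‖ := by gcongr
  have h7 : ‖a - b‖ ≤ (K₀:ℝ) * ‖g a - g b‖ + 2⁻¹ * ‖a - b‖ := by
    calc ‖a - b‖ ≤ (K₀ : ℝ) * ‖(fderiv ℝ g p) (a - b)‖ := h4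
      _ ≤ (K₀:ℝ) * (‖g a - g b‖ + (2 * (K₀:ℝ))⁻¹ * ‖a - b‖) := by
          apply mul_le_mul_of_nonneg_left h5 hK₀R.le
      _ = (K₀:ℝ) * ‖g a - g b‖ + 2⁻¹ * ‖a - b‖ := by
          field_simp
  rw [dist_eq_norm, dist_eq_norm]
  push_cast
  linarith

set_option maxHeartbeats 2000000 in
lemma sard_null {m n : ℕ} (hm : 0 < m)
    {f : EuclideanSpace ℝ (Fin m) → EuclideanSpace ℝ (Fin n)} (hf : ContDiff ℝ 1 f) :
    μH[(m : ℝ)] (f '' {p | ¬ Function.Injective (fderiv ℝ f p)}) = 0 := by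
  classical
  set C := {p : EuclideanSpace ℝ (Fin m) | ¬ Function.Injective (fderiv ℝ f p)} with hCdef
  have hcover : f '' C = ⋃ R : ℕ, f '' (C ∩ Metric.closedBall 0 R) := by
    ext y
    simp only [mem_image, mem_iUnion]
    constructor
    · rintro ⟨p, hp, rfl⟩
      obtain ⟨R, hR⟩ := exists_nat_ge ‖p‖
      exact ⟨R, p, ⟨hp, by simpa [mem_closedBall, dist_eq_norm] using hR⟩, rfl⟩
    · rintro ⟨R, p, ⟨hp, _⟩, rfl⟩
      exact ⟨p, hp, rfl⟩
  rw [hcover]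
  refine measure_iUnion_null fun R => ?_
  -- setup
  set φ := fderiv ℝ f with hφdef
  have hφc : Continuous φ := hf.continuous_fderiv one_ne_zero
  set KS : Set (EuclideanSpace ℝ (Fin m)) := Metric.closedBall 0 (R + 1) with hKS
  have hKc : IsCompact KS := isCompact_closedBall _ _
  obtain ⟨L₀, hL₀⟩ := hKc.exists_bound_of_continuousOn hφc.continuousOn
  set L : ℝ := max L₀ 1 with hLdef
  have hL1 : (1:ℝ) ≤ L := le_max_right _ _
  have hL0 : (0:ℝ) < L := lt_of_lt_of_le one_pos hL1
  have hLb : ∀ u ∈ KS, ‖φ u‖ ≤ L := fun u hu => (hL₀ u hu).trans (le_max_left _ _)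
  have huc := (hKc.uniformContinuousOn_of_continuous hφc.continuousOn)
  rw [Metric.uniformContinuousOn_iff] at huc
  -- epsilon sequence
  set ε : ℕ → ℝ := fun j => 1 / (j + 1) with hεdef
  have hεpos : ∀ j, 0 < ε j := fun j => by show (0:ℝ) < 1 / (j+1); positivity
  have hε1 : ∀ j, ε j ≤ 1 := fun j => by
    show (1:ℝ) / (j + 1) ≤ 1
    rw [div_le_one (by positivity)]
    push_cast; linarith
  -- uniform continuity scales
  have hsel : ∀ j : ℕ, ∃ δ : ℝ, 0 < δ ∧ δ ≤ 1 ∧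
      ∀ u ∈ KS, ∀ v ∈ KS, dist u v ≤ δ → ‖φ u - φ v‖ ≤ ε j := by
    intro j
    obtain ⟨δ₀, hδ₀, hδ⟩ := huc (ε j) (hεpos j)
    refine ⟨min (δ₀/2) 1, by positivity, min_le_right _ _, ?_⟩
    intro u hu v hv hd
    have h1 : dist u v < δ₀ :=
      lt_of_le_of_lt (hd.trans (min_le_left _ _)) (by linarith)
    have h2 := hδ u hu v hv h1
    rw [dist_eq_norm] at h2
    exact h2.le
  choose δ hδpos hδ1 hδuc using hsel
  set r : ℕ → ℝ := fun j => δ j / 2 with hrdef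
  have hrpos : ∀ j, 0 < r j := fun j => by
    have h := hδpos j; show (0:ℝ) < δ j / 2; linarith
  have hr1 : ∀ j, r j ≤ 1 := fun j => by
    have h := hδ1 j; have h2 := hδpos j; show δ j / 2 ≤ (1:ℝ); linarith
  have h2rδ : ∀ j, 2 * r j = δ j := fun j => by show 2 * (δ j / 2) = δ j; ring
  -- grids
  have hgrid : ∀ j : ℕ, ∃ F : Finset (EuclideanSpace ℝ (Fin m)),
      (∀ p : EuclideanSpace ℝ (Fin m), ‖p‖ ≤ (R:ℝ) → ∃ c ∈ F, dist p c ≤ r j) ∧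
      (F.card : ℝ) * (r j) ^ m ≤ (2 * (m + 1) * R + 5 * (r j)) ^ m :=
    fun j => grid_cover m (by positivity) (hrpos j)
  choose F hFcov hFcard using hgrid
  -- slab covers
  have hslab : ∀ j : ℕ, ∀ c : EuclideanSpace ℝ (Fin m),
      ∃ G : Finset (EuclideanSpace ℝ (Fin n)),
      (∀ u ∈ C ∩ Metric.closedBall 0 (R:ℝ) ∩ Metric.closedBall c (r j),
        ∃ q ∈ G, f u ∈ Metric.closedBall q (4 * ε j * r j)) ∧
      (G.card : ℝ) * (2 * ε j * r j) ^ (m - 1) ≤ (2 * (2*m+5) * L * r j) ^ (m - 1) := by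
    intro j c
    by_cases hne : (C ∩ Metric.closedBall 0 (R:ℝ) ∩ Metric.closedBall c (r j)).Nonempty
    · obtain ⟨p, hp⟩ := hne
      obtain ⟨⟨hpC, hpR⟩, hpc⟩ := hp
      set W : Submodule ℝ (EuclideanSpace ℝ (Fin n)) :=
        LinearMap.range ((φ p : EuclideanSpace ℝ (Fin m) →L[ℝ] EuclideanSpace ℝ (Fin n))
          : EuclideanSpace ℝ (Fin m) →ₗ[ℝ] EuclideanSpace ℝ (Fin n)) with hWdef
      have hrank : Module.finrank ℝ W ≤ m - 1 := by
        rw [hWdef]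
        have hker : LinearMap.ker ((φ p : EuclideanSpace ℝ (Fin m) →L[ℝ] _)
            : EuclideanSpace ℝ (Fin m) →ₗ[ℝ] EuclideanSpace ℝ (Fin n)) ≠ ⊥ := by
          intro h
          apply hpC
          have := LinearMap.ker_eq_bot.mp h
          simpa using this
        have h1 := LinearMap.finrank_range_add_finrank_ker
          ((φ p : EuclideanSpace ℝ (Fin m) →L[ℝ] _)
            : EuclideanSpace ℝ (Fin m) →ₗ[ℝ] EuclideanSpace ℝ (Fin n))
        rw [finrank_euclideanSpace_fin] at h1
        have h2 : 1 ≤ Module.finrank ℝ (LinearMap.ker ((φ p : EuclideanSpace ℝ (Fin m) →L[ℝ] _)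
            : EuclideanSpace ℝ (Fin m) →ₗ[ℝ] EuclideanSpace ℝ (Fin n))) :=
          Submodule.one_le_finrank_iff.mpr hker
        omega
      have hρ0 : (0:ℝ) ≤ 2 * L * r j := (mul_pos (mul_pos two_pos hL0) (hrpos j)).le
      have hδs : (0:ℝ) < 2 * ε j * r j := mul_pos (mul_pos two_pos (hεpos j)) (hrpos j)
      obtain ⟨G₀, hG₀cov, hG₀card⟩ := subspace_cover W (m-1) hrank hρ0 hδs
      refine ⟨G₀.image (fun w => f p + w), ?_, ?_⟩
      · intro u hu
        obtain ⟨⟨huC, huR⟩, huc'⟩ := hu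
        have hupd : dist u p ≤ 2 * r j := by
          calc dist u p ≤ dist u c + dist p c := dist_triangle_right u p c
            _ ≤ r j + r j := add_le_add huc' hpc
            _ = 2 * r j := by ring
        -- Taylor estimate
        set s : Set (EuclideanSpace ℝ (Fin m)) :=
          Metric.closedBall p (2 * r j) ∩ Metric.closedBall 0 (R:ℝ) with hsdef
        have hsK : s ⊆ KS := fun z hz => by
          have := hz.2
          rw [hKS]
          exact Metric.closedBall_subset_closedBall (by linarith) this
        have hconv : Convex ℝ s := (convex_closedBall _ _).inter (convex_closedBall _ _)
        have h2r0 : (0:ℝ) ≤ 2 * r j := (mul_pos two_pos (hrpos j)).le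
        have hps : p ∈ s := ⟨Metric.mem_closedBall_self h2r0, hpR⟩
        have hbound : ∀ z ∈ s, ‖φ z - φ p‖ ≤ ε j := by
          intro z hz
          apply hδuc j z (hsK hz) p (hsK hps)
          have h11 := hz.1
          rw [Metric.mem_closedBall] at h11
          rw [← h2rδ j]
          exact h11
        have hus : u ∈ s := ⟨Metric.mem_closedBall.mpr hupd, huR⟩
        have htay : ‖f u - f p - (φ p) (u - p)‖ ≤ ε j * ‖u - p‖ :=
          Convex.norm_image_sub_le_of_norm_fderiv_le'
            (fun z _ => (hf.differentiable one_ne_zero) z) hbound hconv hps hus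
        have hw : (φ p) (u - p) ∈ W := ⟨u - p, rfl⟩
        have hwn : ‖(φ p) (u - p)‖ ≤ 2 * L * r j := by
          calc ‖(φ p) (u - p)‖ ≤ ‖φ p‖ * ‖u - p‖ := (φ p).le_opNorm _
            _ ≤ L * (2 * r j) := by
                apply mul_le_mul (hLb p (hsK hps)) _ (norm_nonneg _) hL0.le
                rw [← dist_eq_norm]; exact hupd
            _ = 2 * L * r j := by ring
        obtain ⟨q₀, hq₀, hq₀d⟩ := hG₀cov _ hw hwn
        refine ⟨f p + q₀, Finset.mem_image_of_mem _ hq₀, ?_⟩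
        rw [Metric.mem_closedBall, dist_eq_norm]
        have hsplit : f u - (f p + q₀) = (f u - f p - (φ p) (u - p)) + ((φ p) (u - p) - q₀) := by
          abel
        rw [hsplit]
        calc ‖(f u - f p - (φ p) (u - p)) + ((φ p) (u - p) - q₀)‖
            ≤ ‖f u - f p - (φ p) (u - p)‖ + ‖(φ p) (u - p) - q₀‖ := norm_add_le _ _
          _ ≤ ε j * ‖u - p‖ + 2 * ε j * r j := by
              apply add_le_add htay
              rw [← dist_eq_norm]; exact hq₀d
          _ ≤ ε j * (2 * r j) + 2 * ε j * r j := by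
              have h9 : ‖u - p‖ ≤ 2 * r j := by rw [← dist_eq_norm]; exact hupd
              have := hεpos j
              nlinarith
          _ = 4 * ε j * r j := by ring
      · calc ((G₀.image (fun w => f p + w)).card : ℝ) * (2 * ε j * r j) ^ (m - 1)
            ≤ (G₀.card : ℝ) * (2 * ε j * r j) ^ (m - 1) := by
              apply mul_le_mul_of_nonneg_right _ (by positivity)
              exact_mod_cast Finset.card_image_le
          _ ≤ (2 * ((m-1:ℕ) + 1) * (2 * L * r j) + 5 * (2 * ε j * r j)) ^ (m - 1) := hG₀card
          _ ≤ (2 * (2*m+5) * L * r j) ^ (m - 1) := by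
              apply pow_le_pow_left₀
              · exact add_nonneg (mul_nonneg (by positivity) hρ0)
                  (mul_nonneg (by norm_num) hδs.le)
              · have hcast : ((m-1 : ℕ) : ℝ) + 1 = (m:ℝ) := by
                  have h99 : m - 1 + 1 = m := Nat.sub_add_cancel hm
                  exact_mod_cast congrArg (Nat.cast : ℕ → ℝ) h99
                rw [hcast]
                have h10 : ε j ≤ L := (hε1 j).trans hL1
                have key : ε j * r j ≤ L * r j :=
                  mul_le_mul_of_nonneg_right h10 (hrpos j).le
                have e1 : 2 * (m:ℝ) * (2 * L * r j) + 5 * (2 * ε j * r j)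
                    = 4*(m:ℝ)*(L*r j) + 10*(ε j*r j) := by ring
                have e2 : 2 * (2*(m:ℝ)+5) * L * r j
                    = 4*(m:ℝ)*(L*r j) + 10*(L*r j) := by ring
                rw [e1, e2]
                linarith
    · refine ⟨∅, ?_, ?_⟩
      · intro u hu
        exact absurd ⟨u, hu⟩ hne
      · simp only [Finset.card_empty, Nat.cast_zero, zero_mul]
        apply pow_nonneg
        exact mul_nonneg (mul_nonneg (by positivity) hL0.le) (hrpos j).le
  choose G hGcov hGcard using hslab
  -- flatten the covering families
  set T : ℕ → Finset (Set (EuclideanSpace ℝ (Fin n))) := fun j =>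
    (F j).biUnion (fun c => (G j c).image
      (fun q => Metric.closedBall q (4 * ε j * r j))) with hT
  have hTball : ∀ j, ∀ S ∈ T j, ∃ q, S = Metric.closedBall q (4 * ε j * r j) := by
    intro j S hS
    rw [hT, Finset.mem_biUnion] at hS
    obtain ⟨c, _, hS2⟩ := hS
    rw [Finset.mem_image] at hS2
    obtain ⟨q, _, rfl⟩ := hS2
    exact ⟨q, rfl⟩
  have hTcard : ∀ j, ((T j).card : ℝ) ≤ ∑ c ∈ F j, ((G j c).card : ℝ) := by
    intro j
    have h1 := Finset.card_biUnion_le (s := F j)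
      (t := fun c => (G j c).image (fun q => Metric.closedBall q (4 * ε j * r j)))
    have h2 : (∑ c ∈ F j, ((G j c).image
          (fun q => Metric.closedBall q (4 * ε j * r j))).card)
        ≤ ∑ c ∈ F j, (G j c).card :=
      Finset.sum_le_sum fun c _ => Finset.card_image_le
    calc ((T j).card : ℝ) ≤ ((∑ c ∈ F j, (G j c).card : ℕ) : ℝ) := by
          exact_mod_cast h1.trans h2
      _ = ∑ c ∈ F j, ((G j c).card : ℝ) := by push_cast; rfl
  set rb : ℕ → ℝ≥0∞ := fun j => ENNReal.ofReal (8 * ε j * r j) with hrb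
  have hrb0 : Filter.Tendsto rb Filter.atTop (nhds 0) := by
    have h1 : Filter.Tendsto (fun j : ℕ => 8 * ε j * r j) Filter.atTop (nhds 0) := by
      have h2 : Filter.Tendsto ε Filter.atTop (nhds 0) := by
        rw [hεdef]
        exact tendsto_one_div_add_atTop_nhds_zero_nat
      have h7 : ∀ j : ℕ, 0 ≤ 8 * ε j * r j := fun j => by
        have h3 := hεpos j; have h4 := hrpos j
        nlinarith
      have h8 : ∀ j : ℕ, 8 * ε j * r j ≤ 8 * ε j := fun j => by
        have h3 := hr1 j
        have h4 := hεpos j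
        have h5 := hrpos j
        nlinarith
      have h9 : Filter.Tendsto (fun j : ℕ => 8 * ε j) Filter.atTop (nhds 0) := by
        have h10 := h2.const_mul (8:ℝ)
        rw [mul_zero] at h10
        exact h10
      exact squeeze_zero h7 h8 h9
    have h6 : Filter.Tendsto (fun j => ENNReal.ofReal (8 * ε j * r j)) Filter.atTop
        (nhds (ENNReal.ofReal 0)) := ENNReal.tendsto_ofReal h1
    simpa using h6
  have hdiam : ∀ j, ∀ i : {S // S ∈ T j}, EMetric.diam (i : Set (EuclideanSpace ℝ (Fin n))) ≤ rb j := by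
    rintro j ⟨S, hS⟩
    obtain ⟨q, rfl⟩ := hTball j S hS
    have h40 : (0:ℝ) ≤ 4 * ε j * r j :=
      (mul_pos (mul_pos (by norm_num : (0:ℝ) < 4) (hεpos j)) (hrpos j)).le
    show EMetric.diam (Metric.closedBall q (4 * ε j * r j)) ≤ rb j
    rw [← Metric.emetric_closedBall h40]
    refine le_trans EMetric.diam_closedBall ?_
    show 2 * ENNReal.ofReal (4 * ε j * r j) ≤ ENNReal.ofReal (8 * ε j * r j)
    rw [show (8 : ℝ) * ε j * r j = 2 * (4 * ε j * r j) by ring]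
    rw [ENNReal.ofReal_mul (by norm_num : (0:ℝ) ≤ 2)]
    gcongr
    simp
  have hcovj : ∀ j, f '' (C ∩ Metric.closedBall 0 (R:ℝ)) ⊆
      ⋃ i : {S // S ∈ T j}, (i : Set (EuclideanSpace ℝ (Fin n))) := by
    intro j y hy
    obtain ⟨u, ⟨huC, huR⟩, rfl⟩ := hy
    obtain ⟨c, hc, hdc⟩ := hFcov j u (by
      rw [Metric.mem_closedBall, dist_eq_norm] at huR
      simpa using huR)
    obtain ⟨q, hq, hmem⟩ := hGcov j c u ⟨⟨huC, huR⟩, Metric.mem_closedBall.mpr hdc⟩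
    have hqT : Metric.closedBall q (4 * ε j * r j) ∈ T j := by
      rw [hT, Finset.mem_biUnion]
      exact ⟨c, hc, Finset.mem_image_of_mem _ hq⟩
    exact mem_iUnion.mpr ⟨⟨_, hqT⟩, hmem⟩
  have hmain := MeasureTheory.Measure.hausdorffMeasure_le_liminf_sum
    (ι := fun j => {S // S ∈ T j}) (m : ℝ)
    (f '' (C ∩ Metric.closedBall 0 (R:ℝ))) rb hrb0
    (fun j i => (i : Set (EuclideanSpace ℝ (Fin n))))
    (Filter.Eventually.of_forall hdiam) (Filter.Eventually.of_forall hcovj)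
  -- bound the sums
  set CC : ℝ := 8^m * (2*(2*m+5)*L)^(m-1) * (2*(m+1)*R+5)^m with hCC
  have hsum : ∀ j : ℕ,
      (∑ i : {S // S ∈ T j}, EMetric.diam (i : Set (EuclideanSpace ℝ (Fin n))) ^ (m:ℝ))
        ≤ ENNReal.ofReal (CC * ε j) := by
    intro j
    have hεj := hεpos j
    have hrj := hrpos j
    have h8r0 : (0:ℝ) ≤ (8 * ε j * r j)^m := by
      apply pow_nonneg
      nlinarith
    have hcardreal : (((T j).card : ℝ)) * (8 * ε j * r j)^m ≤ CC * ε j := by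
      have h1 : (((T j).card : ℝ)) * (2 * ε j * r j) ^ (m-1)
          ≤ ((F j).card : ℝ) * (2 * (2*m+5) * L * r j) ^ (m-1) := by
        have h2ε0 : (0:ℝ) ≤ (2 * ε j * r j) ^ (m-1) := by
          apply pow_nonneg; nlinarith
        calc (((T j).card : ℝ)) * (2 * ε j * r j) ^ (m-1)
            ≤ (∑ c ∈ F j, ((G j c).card : ℝ)) * (2 * ε j * r j) ^ (m-1) :=
              mul_le_mul_of_nonneg_right (hTcard j) h2ε0
          _ = ∑ c ∈ F j, ((G j c).card : ℝ) * (2 * ε j * r j) ^ (m-1) := by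
              rw [Finset.sum_mul]
          _ ≤ ∑ _c ∈ F j, (2 * (2*m+5) * L * r j) ^ (m-1) :=
              Finset.sum_le_sum (fun c _ => hGcard j c)
          _ = ((F j).card : ℝ) * (2 * (2*m+5) * L * r j) ^ (m-1) := by
              rw [Finset.sum_const, nsmul_eq_mul]
      have h2 : ((F j).card : ℝ) * (r j)^m ≤ (2*(m+1)*R+5)^m := by
        refine (hFcard j).trans ?_
        apply pow_le_pow_left₀
        · have : (0:ℝ) ≤ 2 * ((m:ℝ) + 1) * (R:ℝ) := by positivity
          nlinarith
        · have h3 := hr1 j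
          have : 5 * r j ≤ 5 := by linarith
          linarith
      have hm1 : m - 1 + 1 = m := Nat.sub_add_cancel hm
      have hpow8 : (8 * ε j * r j)^m ≤ 8^m * ε j * r j * (2 * ε j * r j)^(m-1) := by
        have e1 : (8 * ε j * r j)^m = 8^m * ((ε j * r j)^(m-1) * (ε j * r j)) := by
          rw [mul_pow, mul_pow, ← pow_succ, hm1]
          ring
        have e2 : 8^m * ε j * r j * (2 * ε j * r j)^(m-1)
            = 8^m * (2^(m-1) * ((ε j * r j)^(m-1) * (ε j * r j))) := by
          rw [mul_pow, mul_pow]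
          ring
        rw [e1, e2]
        have h3 : (1:ℝ) ≤ 2^(m-1) := one_le_pow₀ (by norm_num)
        have h4 : (0:ℝ) ≤ (ε j * r j)^(m-1) * (ε j * r j) := by
          apply mul_nonneg (pow_nonneg (by nlinarith) _) (by nlinarith)
        nlinarith [pow_pos (show (0:ℝ) < 8 by norm_num) m]
      have hcard0 : (0:ℝ) ≤ ((T j).card : ℝ) := Nat.cast_nonneg _
      have hLrm : (0:ℝ) ≤ (2*(2*(m:ℝ)+5)*L)^(m-1) := by
        apply pow_nonneg
        have : (0:ℝ) ≤ 2*(2*(m:ℝ)+5) := by positivity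
        nlinarith
      calc (((T j).card : ℝ)) * (8 * ε j * r j)^m
          ≤ (((T j).card : ℝ)) * (8^m * ε j * r j * (2 * ε j * r j)^(m-1)) :=
            mul_le_mul_of_nonneg_left hpow8 hcard0
        _ = (8^m * ε j * r j) * ((((T j).card : ℝ)) * (2 * ε j * r j)^(m-1)) := by ring
        _ ≤ (8^m * ε j * r j) * (((F j).card : ℝ) * (2 * (2*m+5) * L * r j) ^ (m-1)) := by
            apply mul_le_mul_of_nonneg_left h1
            have h5 : (0:ℝ) < 8^m := pow_pos (by norm_num) m
            exact mul_nonneg (mul_nonneg h5.le hεj.le) hrj.le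
        _ = (8^m * ε j) * (2*(2*m+5)*L)^(m-1) * (((F j).card : ℝ) * (r j)^m) := by
            rw [mul_pow (2*(2*(m:ℝ)+5)*L) (r j) (m-1),
              show ((F j).card : ℝ) * (r j)^m = ((F j).card : ℝ) * ((r j)^(m-1) * r j) by
                rw [← pow_succ, hm1]]
            ring
        _ ≤ (8^m * ε j) * (2*(2*m+5)*L)^(m-1) * (2*(m+1)*R+5)^m := by
            apply mul_le_mul_of_nonneg_left h2
            have h5 : (0:ℝ) < 8^m := pow_pos (by norm_num) m
            exact mul_nonneg (mul_nonneg h5.le hεj.le) hLrm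
        _ = CC * ε j := by rw [hCC]; ring
    calc (∑ i : {S // S ∈ T j}, EMetric.diam (i : Set (EuclideanSpace ℝ (Fin n))) ^ (m:ℝ))
        ≤ ∑ _i : {S // S ∈ T j}, ENNReal.ofReal ((8 * ε j * r j)^m) := by
          apply Finset.sum_le_sum
          intro i _
          have h5 := hdiam j i
          calc EMetric.diam (i : Set (EuclideanSpace ℝ (Fin n))) ^ (m:ℝ)
              ≤ (rb j) ^ (m:ℝ) := ENNReal.rpow_le_rpow h5 (by positivity)
            _ = ENNReal.ofReal ((8 * ε j * r j)^m) := by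
                rw [hrb, ENNReal.rpow_natCast, ← ENNReal.ofReal_pow (by nlinarith)]
      _ = ((T j).card : ℝ≥0∞) * ENNReal.ofReal ((8 * ε j * r j)^m) := by
          rw [Finset.sum_const, nsmul_eq_mul]
          congr 1
          simp [Finset.card_univ]
      _ = ENNReal.ofReal (((T j).card : ℝ) * (8 * ε j * r j)^m) := by
          rw [ENNReal.ofReal_mul (Nat.cast_nonneg _), ENNReal.ofReal_natCast]
      _ ≤ ENNReal.ofReal (CC * ε j) := ENNReal.ofReal_le_ofReal hcardreal
  have hlim2 : Filter.Tendsto (fun j => ENNReal.ofReal (CC * ε j)) Filter.atTop (nhds 0) := by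
    have h1 : Filter.Tendsto (fun j : ℕ => CC * ε j) Filter.atTop (nhds 0) := by
      have h2 : Filter.Tendsto ε Filter.atTop (nhds 0) := by
        rw [hεdef]
        exact tendsto_one_div_add_atTop_nhds_zero_nat
      have h10 := h2.const_mul CC
      rw [mul_zero] at h10
      exact h10
    simpa using ENNReal.tendsto_ofReal h1
  have hfinal : μH[(m:ℝ)] (f '' (C ∩ Metric.closedBall 0 (R:ℝ))) ≤ 0 := by
    refine hmain.trans ?_
    calc Filter.liminf (fun j => ∑ i : {S // S ∈ T j},
            EMetric.diam (i : Set (EuclideanSpace ℝ (Fin n))) ^ (m:ℝ)) Filter.atTop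
        ≤ Filter.liminf (fun j => ENNReal.ofReal (CC * ε j)) Filter.atTop :=
          Filter.liminf_le_liminf (Filter.Eventually.of_forall hsum)
      _ = 0 := hlim2.liminf_eq
  exact le_antisymm hfinal zero_le

lemma pos_of_not_mem_tangent {m n : ℕ} {E : Set (EuclideanSpace ℝ (Fin n))}
    {f : EuclideanSpace ℝ (Fin m) → EuclideanSpace ℝ (Fin n)}
    (hf1 : ContDiff ℝ 1 f) (hf2 : Topology.IsEmbedding f)
    {p : EuclideanSpace ℝ (Fin m)} (hinj : Function.Injective (fderiv ℝ f p))
    (hpos : ∀ V : Set (EuclideanSpace ℝ (Fin n)), IsOpen V → f p ∈ V →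
      0 < μH[(m : ℝ)] (E ∩ Set.range f ∩ V))
    {x : EuclideanSpace ℝ (Fin n)}
    (hx : ¬ ∃ w : EuclideanSpace ℝ (Fin m), x = f p + fderiv ℝ f p w) :
    0 < μH[(m : ℝ)] (radialProj x '' (E \ {x})) := by
  classical
  set y := f p with hydef
  have hxy : y ≠ x := by
    intro h
    exact hx ⟨0, by rw [← h, map_zero, add_zero]⟩
  set g : EuclideanSpace ℝ (Fin m) → EuclideanSpace ℝ (Fin n) :=
    fun q => radialProj x (f q) with hgdef
  have hgc : ContDiffAt ℝ 1 g p :=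
    (radialProj_contDiffAt hxy).comp p hf1.contDiffAt
  have hgd : fderiv ℝ g p = (fderiv ℝ (radialProj x) y).comp (fderiv ℝ f p) := by
    rw [hgdef]
    exact fderiv_comp p ((radialProj_contDiffAt hxy).differentiableAt one_ne_zero)
      (hf1.differentiable one_ne_zero p)
  have hginj : Function.Injective (fderiv ℝ g p) := by
    rw [hgd]
    intro a b hab
    have h1 : fderiv ℝ (radialProj x) y (fderiv ℝ f p (a - b)) = 0 := by
      rw [map_sub, map_sub, sub_eq_zero]
      simpa using hab
    obtain ⟨t, ht⟩ := radialProj_fderiv_ker hxy h1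
    by_cases hab0 : a - b = 0
    · exact sub_eq_zero.mp hab0
    exfalso
    have ht0 : t ≠ 0 := by
      intro h0
      rw [h0, zero_smul] at ht
      exact hab0 (hinj (by rw [ht, map_zero]))
    apply hx
    refine ⟨(-t⁻¹) • (a - b), ?_⟩
    have h2 : fderiv ℝ f p ((-t⁻¹) • (a - b)) = (-t⁻¹) • (t • (y - x)) := by
      rw [_root_.map_smul, ht]
    rw [h2, smul_smul, neg_mul, inv_mul_cancel₀ ht0, neg_smul, one_smul]
    abel
  obtain ⟨u, hu, K, hK⟩ := exists_antilip_nbhd hgc hginj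
  -- shrink the ball so that its image avoids x
  have hd2 : 0 < dist x y := dist_pos.mpr (fun h => hxy (h ▸ rfl))
  have hcont : ContinuousAt f p := (hf1.continuous).continuousAt
  obtain ⟨u', hu', hfu'⟩ := Metric.continuousAt_iff.mp hcont (dist x y / 2) (by linarith)
  set u'' := min u u' with hu''def
  have hu''pos : 0 < u'' := lt_min hu hu'
  obtain ⟨V₀, hV₀open, hV₀⟩ : ∃ V₀, IsOpen V₀ ∧ f ⁻¹' V₀ = ball p u'' :=
    hf2.isInducing.isOpen_iff.mp isOpen_ball
  set V : Set (EuclideanSpace ℝ (Fin n)) := V₀ ∩ ball y (dist x y / 2) with hVdef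
  have hVopen : IsOpen V := hV₀open.inter isOpen_ball
  have hyV : y ∈ V := by
    constructor
    · have h6 : p ∈ f ⁻¹' V₀ := by rw [hV₀]; exact mem_ball_self hu''pos
      exact h6
    · exact mem_ball_self (by linarith)
  have hxV : x ∉ V := by
    intro hxVmem
    have h7 := hxVmem.2
    rw [mem_ball] at h7
    linarith
  set A : Set (EuclideanSpace ℝ (Fin m)) := f ⁻¹' (E ∩ V) ∩ ball p u'' with hAdef
  have hfA : f '' A = E ∩ Set.range f ∩ V := by
    apply Set.Subset.antisymm
    · rintro z ⟨a, ⟨haEV, _⟩, rfl⟩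
      exact ⟨⟨haEV.1, mem_range_self a⟩, haEV.2⟩
    · rintro z ⟨⟨hzE, q, rfl⟩, hzV⟩
      refine ⟨q, ⟨⟨hzE, hzV⟩, ?_⟩, rfl⟩
      have h8 : q ∈ f ⁻¹' V₀ := hzV.1
      rw [hV₀] at h8
      exact h8
  have hposA : 0 < μH[(m:ℝ)] (f '' A) := by
    rw [hfA]
    exact hpos V hVopen hyV
  -- f is Lipschitz on the ball
  obtain ⟨Lf, hLf⟩ : ∃ Lf : ℝ≥0, LipschitzOnWith Lf f (ball p u'') := by
    obtain ⟨Cb, hCb⟩ := (isCompact_closedBall p u'').exists_bound_of_continuousOn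
      ((hf1.continuous_fderiv one_ne_zero).continuousOn)
    refine ⟨⟨max Cb 0, le_max_right _ _⟩, ?_⟩
    apply Convex.lipschitzOnWith_of_nnnorm_fderiv_le
      (fun z _ => (hf1.differentiable one_ne_zero z)) ?_ (convex_ball _ _)
    intro z hz
    have h5 : ‖fderiv ℝ f z‖ ≤ Cb := hCb z (ball_subset_closedBall hz)
    change ((‖fderiv ℝ f z‖₊ : ℝ≥0) : ℝ) ≤ max Cb 0
    simp only [coe_nnnorm]
    exact h5.trans (le_max_left _ _)
  have hALip : LipschitzOnWith Lf f A := hLf.mono (by rw [hAdef]; exact inter_subset_right)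
  have hmnn : (0:ℝ) ≤ (m:ℝ) := Nat.cast_nonneg _
  have hμA : 0 < μH[(m:ℝ)] A := by
    by_contra h
    push_neg at h
    have h0 : μH[(m:ℝ)] A = 0 := le_antisymm (by simpa using h) zero_le
    have h9 := hALip.hausdorffMeasure_image_le hmnn
    rw [h0, mul_zero] at h9
    exact absurd (le_antisymm h9 zero_le) (ne_of_gt hposA)
  have hanti : ∀ a ∈ A, ∀ b ∈ A, dist a b ≤ K * dist (g a) (g b) := by
    intro a ha b hb
    exact hK a (ball_subset_ball (min_le_left _ _) ha.2)
      b (ball_subset_ball (min_le_left _ _) hb.2)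
  have hgA := hm_le_of_antilip hmnn hanti
  have hposgA : 0 < μH[(m:ℝ)] (g '' A) := by
    by_contra h
    push_neg at h
    have h0 : μH[(m:ℝ)] (g '' A) = 0 := le_antisymm (by simpa using h) zero_le
    rw [h0, mul_zero] at hgA
    exact absurd (le_antisymm hgA zero_le) (ne_of_gt hμA)
  have hsub2 : g '' A ⊆ radialProj x '' (E \ {x}) := by
    rintro z ⟨a, ha, rfl⟩
    refine ⟨f a, ⟨ha.1.1, ?_⟩, rfl⟩
    intro hfa
    apply hxV
    rw [← (mem_singleton_iff.mp hfa)]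
    exact ha.1.2
  exact lt_of_lt_of_le hposgA (measure_mono hsub2)

/-- If `E ⊆ ℝⁿ` is `m`-rectifiable and not essentially `m`-flat, then for `ℋᵐ`-a.e. `x ∈ ℝⁿ`
the radial projection `π_x(E \ {x})` has positive `ℋᵐ` measure. -/
theorem stmt0 {n m : ℕ} (hm : 0 < m) (hmn : m < n)
    (E : Set (EuclideanSpace ℝ (Fin n)))
    (hE : IsRectifiableSet m n E)
    (hflat : ¬ ∃ T : Set (EuclideanSpace ℝ (Fin n)), IsAffinePlane m T ∧ μH[(m : ℝ)] (E \ T) = 0) :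
    ∀ᵐ x ∂(μH[(m : ℝ)] : Measure (EuclideanSpace ℝ (Fin n))),
      0 < μH[(m : ℝ)] (radialProj x '' (E \ {x})) := by
  classical
  obtain ⟨hEmeas, hEpos, f, hfprop, hcover⟩ := hE
  rw [MeasureTheory.ae_iff]
  set B := {x : EuclideanSpace ℝ (Fin n) | ¬ 0 < μH[(m:ℝ)] (radialProj x '' (E \ {x}))} with hB
  show μH[(m:ℝ)] B = 0
  have hBbad : ∀ x ∈ B, μH[(m:ℝ)] (radialProj x '' (E \ {x})) = 0 := fun x hx =>
    le_antisymm (by simpa using not_lt.mp hx) zero_le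
  set D : ℕ → Set (EuclideanSpace ℝ (Fin n)) := fun i =>
    {y | ∃ p, f i p = y ∧ Function.Injective (fderiv ℝ (f i) p) ∧
      ∀ V, IsOpen V → y ∈ V → 0 < μH[(m:ℝ)] (E ∩ Set.range (f i) ∩ V)} with hD
  set N : ℕ → Set (EuclideanSpace ℝ (Fin n)) := fun i =>
    {y | (y ∈ E ∩ Set.range (f i)) ∧
      ∃ V, IsOpen V ∧ y ∈ V ∧ μH[(m:ℝ)] (E ∩ Set.range (f i) ∩ V) = 0} with hN
  have hNnull : ∀ i, μH[(m:ℝ)] (N i) = 0 := by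
    intro i
    apply measure_null_of_locally_null
    intro x hx
    obtain ⟨⟨hxE, hxR⟩, V, hVopen, hxV, hV0⟩ := hx
    refine ⟨N i ∩ V, inter_mem_nhdsWithin _ (hVopen.mem_nhds hxV), ?_⟩
    apply measure_mono_null _ hV0
    rintro z ⟨⟨⟨hzE, hzR⟩, _⟩, hzV⟩
    exact ⟨⟨hzE, hzR⟩, hzV⟩
  have hED : μH[(m:ℝ)] (E \ ⋃ i, D i) = 0 := by
    have hsub : E \ ⋃ i, D i ⊆ (E \ ⋃ i, Set.range (f i)) ∪
        ⋃ i, (f i '' {p | ¬ Function.Injective (fderiv ℝ (f i) p)} ∪ N i) := by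
      intro y hy
      by_cases hyR : y ∈ ⋃ i, Set.range (f i)
      · obtain ⟨i, hyr⟩ := mem_iUnion.mp hyR
        obtain ⟨p, hpy⟩ := hyr
        right
        apply mem_iUnion.mpr
        refine ⟨i, ?_⟩
        by_cases hcrit : ∃ p', f i p' = y ∧ ¬ Function.Injective (fderiv ℝ (f i) p')
        · obtain ⟨p', hp'y, hp'⟩ := hcrit
          exact Or.inl ⟨p', hp', hp'y⟩
        · push_neg at hcrit
          have hpinj : Function.Injective (fderiv ℝ (f i) p) := by
            by_contra hni
            exact hni (hcrit p hpy)
          have hyD : y ∉ D i := fun hyDi => hy.2 (mem_iUnion.mpr ⟨i, hyDi⟩)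
          have hnot : ¬ (∀ V, IsOpen V → y ∈ V →
              0 < μH[(m:ℝ)] (E ∩ Set.range (f i) ∩ V)) := by
            intro hall
            exact hyD ⟨p, hpy, hpinj, hall⟩
          push_neg at hnot
          obtain ⟨V, hVo, hyV, hV⟩ := hnot
          exact Or.inr ⟨⟨hy.1, ⟨p, hpy⟩⟩, V, hVo, hyV,
            le_antisymm (by simpa using hV) zero_le⟩
      · left
        exact ⟨hy.1, hyR⟩
    apply measure_mono_null hsub
    apply measure_union_null hcover
    apply measure_iUnion_null
    intro i
    apply measure_union_null
    · exact sard_null hm (hfprop i).1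
    · exact hNnull i
  -- key: bad points lie in tangent planes at points of D i
  have hkey : ∀ i, ∀ y ∈ D i, ∃ W : Submodule ℝ (EuclideanSpace ℝ (Fin n)),
      Module.finrank ℝ W = m ∧ ∀ x ∈ B, x - y ∈ W := by
    intro i y hyD
    obtain ⟨p, rfl, hpinj, hppos⟩ := hyD
    refine ⟨LinearMap.range ((fderiv ℝ (f i) p :
        EuclideanSpace ℝ (Fin m) →L[ℝ] EuclideanSpace ℝ (Fin n))
        : EuclideanSpace ℝ (Fin m) →ₗ[ℝ] EuclideanSpace ℝ (Fin n)), ?_, ?_⟩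
    · rw [LinearMap.finrank_range_of_inj (by simpa using hpinj)]
      exact finrank_euclideanSpace_fin
    · intro x hxB
      by_contra hxw
      have hne : ¬ ∃ w, x = f i p + fderiv ℝ (f i) p w := by
        rintro ⟨w, rfl⟩
        exact hxw ⟨w, by simp⟩
      have hposx := pos_of_not_mem_tangent (hfprop i).1 (hfprop i).2 hpinj hppos hne
      rw [hBbad x hxB] at hposx
      exact lt_irrefl 0 hposx
  rcases B.eq_empty_or_nonempty with hBe | hBne
  · rw [hBe]; exact measure_empty
  have hDne : ∃ i, (D i).Nonempty := by
    by_contra hno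
    push_neg at hno
    have h1 : (⋃ i, D i) = (∅ : Set (EuclideanSpace ℝ (Fin n))) :=
      iUnion_eq_empty.mpr hno
    rw [h1, diff_empty] at hED
    exact absurd hED (ne_of_gt hEpos)
  obtain ⟨i₀, y₀, hy₀⟩ := hDne
  obtain ⟨W₀, hW₀rank, hW₀⟩ := hkey i₀ y₀ hy₀
  set Q : AffineSubspace ℝ (EuclideanSpace ℝ (Fin n)) := affineSpan ℝ B with hQ
  have hQle : ∀ (y : EuclideanSpace ℝ (Fin n)) (W : Submodule ℝ (EuclideanSpace ℝ (Fin n))),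
      (∀ x ∈ B, x - y ∈ W) → Q ≤ AffineSubspace.mk' y W := by
    intro y W hmem
    apply affineSpan_le.mpr
    intro x hxB
    rw [SetLike.mem_coe, AffineSubspace.mem_mk']
    exact hmem x hxB
  have hQ0 : Q ≤ AffineSubspace.mk' y₀ W₀ := hQle y₀ W₀ hW₀
  have hQdir : Module.finrank ℝ Q.direction ≤ m := by
    have h1 := Submodule.finrank_mono (AffineSubspace.direction_le hQ0)
    rwa [AffineSubspace.direction_mk', hW₀rank] at h1
  rcases lt_or_eq_of_le hQdir with hlt | heq
  · have h0 : μH[(m:ℝ)] (Q : Set (EuclideanSpace ℝ (Fin n))) = 0 :=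
      hm_affine_null Q (by exact_mod_cast hlt)
    exact measure_mono_null (subset_affineSpan ℝ B) h0
  · exfalso
    apply hflat
    obtain ⟨q₀, hq₀⟩ := hBne
    have hq₀Q : q₀ ∈ Q := subset_affineSpan ℝ B hq₀
    have hDQ : ∀ i, D i ⊆ (Q : Set (EuclideanSpace ℝ (Fin n))) := by
      intro i y hyD
      obtain ⟨W, hWrank, hWmem⟩ := hkey i y hyD
      have hle := hQle y W hWmem
      have hdir : Q.direction = (AffineSubspace.mk' y W).direction := by
        apply Submodule.eq_of_le_of_finrank_eq (AffineSubspace.direction_le hle)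
        rw [AffineSubspace.direction_mk', hWrank, heq]
      have hQeq : Q = AffineSubspace.mk' y W :=
        AffineSubspace.ext_of_direction_eq hdir ⟨q₀, hq₀Q, hle hq₀Q⟩
      rw [hQeq]
      exact AffineSubspace.self_mem_mk' y W
    have hEQ : μH[(m:ℝ)] (E \ (Q : Set (EuclideanSpace ℝ (Fin n)))) = 0 := by
      apply measure_mono_null _ hED
      intro z hz
      refine ⟨hz.1, fun hzD => hz.2 ?_⟩
      obtain ⟨i, hzDi⟩ := mem_iUnion.mp hzD
      exact hDQ i hzDi
    refine ⟨(Q : Set (EuclideanSpace ℝ (Fin n))), ⟨Q.direction, q₀, heq, ?_⟩, hEQ⟩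
    ext z
    constructor
    · intro hzQ
      refine ⟨z - q₀, AffineSubspace.vsub_mem_direction hzQ hq₀Q, ?_⟩
      show q₀ + (z - q₀) = z
      abel
    · rintro ⟨w, hw, rfl⟩
      have h2 := AffineSubspace.vadd_mem_of_mem_direction hw hq₀Q
      simpa [add_comm] using h2
end

section
/- Let n, m be positive integers with m < n. Let f : ℝᵐ → ℝⁿ be a C¹ embedding, let x₀ ∈ ℝᵐ, set z₀ = f(x₀), and assume the derivative f'(x₀) has rank m (i.e., dim f'(x₀)ℝᵐ = m). Let T = z₀ + f'(x₀)ℝᵐ be the affine tangent m-plane at z₀, and let x ∈ ℝⁿ with x ∉ T. Then there exists δ > 0 such that the radial projection π_x restricted to f(ℝᵐ) ∩ B(z₀, δ) is bilipschitz, i.e., there exist constants 0 < c ≤ C < ∞ with c|y − z| ≤ |π_x(y) − π_x(z)| ≤ C|y − z| for all y, z ∈ f(ℝᵐ) ∩ B(z₀, δ). -/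
open MeasureTheory Metric Set
open scoped ENNReal

section Aux
variable {E : Type*} [NormedAddCommGroup E] [InnerProductSpace ℝ E]

lemma aux_unit (a b : E) (ha : ‖a‖ = 1) (hb : ‖b‖ = 1) :
    ‖b - (inner ℝ a b : ℝ) • a‖ ≤ ‖a - b‖ := by
  have h1 : ‖b - (inner ℝ a b : ℝ) • a‖ ^ 2 ≤ ‖a - b‖ ^ 2 := by
    rw [norm_sub_sq_real, norm_sub_sq_real]
    rw [real_inner_smul_right, norm_smul, real_inner_comm b a]
    simp only [ha, hb, Real.norm_eq_abs]
    nlinarith [sq_nonneg ((inner ℝ b a : ℝ) - 1), sq_abs (inner ℝ b a : ℝ)]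
  have := Real.sqrt_le_sqrt h1
  rwa [Real.sqrt_sq (norm_nonneg _), Real.sqrt_sq (norm_nonneg _)] at this

lemma aux_lower (u v : E) (hu : u ≠ 0) (hv : v ≠ 0) :
    ∃ t : ℝ, ‖v - t • u‖ ≤ ‖v‖ * ‖‖u‖⁻¹ • u - ‖v‖⁻¹ • v‖ := by
  set a : E := ‖u‖⁻¹ • u with ha'
  set b : E := ‖v‖⁻¹ • v with hb'
  have ha : ‖a‖ = 1 := norm_smul_inv_norm hu
  have hb : ‖b‖ = 1 := norm_smul_inv_norm hv
  refine ⟨(inner ℝ a b : ℝ) * ‖v‖ * ‖u‖⁻¹, ?_⟩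
  have hveq : v - ((inner ℝ a b : ℝ) * ‖v‖ * ‖u‖⁻¹) • u
      = ‖v‖ • (b - (inner ℝ a b : ℝ) • a) := by
    rw [smul_sub, hb', ha', smul_smul, smul_smul, smul_smul,
      mul_inv_cancel₀ (norm_ne_zero_iff.mpr hv), one_smul,
      show ‖v‖ * (inner ℝ a b : ℝ) * ‖u‖⁻¹ = (inner ℝ a b : ℝ) * ‖v‖ * ‖u‖⁻¹ from by ring]
  rw [hveq, norm_smul, Real.norm_eq_abs, abs_of_nonneg (norm_nonneg v)]
  exact mul_le_mul_of_nonneg_left (aux_unit a b ha hb) (norm_nonneg v)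

lemma aux_upper (u v : E) (hu : u ≠ 0) (hv : v ≠ 0) :
    ‖‖u‖⁻¹ • u - ‖v‖⁻¹ • v‖ ≤ 2 / ‖u‖ * ‖u - v‖ := by
  have hu0 : (0:ℝ) < ‖u‖ := norm_pos_iff.mpr hu
  have hv0 : (0:ℝ) < ‖v‖ := norm_pos_iff.mpr hv
  have h : ‖u‖⁻¹ • u - ‖v‖⁻¹ • v = ‖u‖⁻¹ • (u - v) + (‖u‖⁻¹ - ‖v‖⁻¹) • v := by
    rw [smul_sub, sub_smul]; abel
  rw [h]
  have h2 : ‖(‖u‖⁻¹ - ‖v‖⁻¹) • v‖ ≤ ‖u‖⁻¹ * ‖u - v‖ := by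
    have key : |(‖u‖⁻¹ - ‖v‖⁻¹) * ‖v‖| ≤ ‖u‖⁻¹ * ‖u - v‖ := by
      have he : (‖u‖⁻¹ - ‖v‖⁻¹) * ‖v‖ = (‖v‖ - ‖u‖) / ‖u‖ := by field_simp
      rw [he, abs_div, abs_of_pos hu0, div_eq_inv_mul]
      refine mul_le_mul_of_nonneg_left ?_ (inv_nonneg.mpr hu0.le)
      rw [abs_sub_comm]; exact abs_norm_sub_norm_le u v
    rw [norm_smul, Real.norm_eq_abs]
    calc |‖u‖⁻¹ - ‖v‖⁻¹| * ‖v‖ = |(‖u‖⁻¹ - ‖v‖⁻¹) * ‖v‖| := by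
          rw [abs_mul, abs_of_nonneg (norm_nonneg v)]
      _ ≤ ‖u‖⁻¹ * ‖u - v‖ := key
  calc ‖‖u‖⁻¹ • (u - v) + (‖u‖⁻¹ - ‖v‖⁻¹) • v‖
      ≤ ‖‖u‖⁻¹ • (u - v)‖ + ‖(‖u‖⁻¹ - ‖v‖⁻¹) • v‖ := norm_add_le _ _
    _ ≤ ‖u‖⁻¹ * ‖u - v‖ + ‖u‖⁻¹ * ‖u - v‖ := by
        refine add_le_add (le_of_eq ?_) h2
        rw [norm_smul, Real.norm_eq_abs, abs_of_pos (by positivity)]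
    _ = 2 / ‖u‖ * ‖u - v‖ := by ring

lemma aux_seg (a : ℝ) (ha : 0 < a) (u w : E) (Q : E →L[ℝ] E)
    (hQ : ∀ v, ‖Q v‖ ≤ ‖v‖) (hu : a * ‖u‖ ≤ ‖Q u‖) (hw : ‖Q w‖ ≤ a / 4 * ‖w‖) (t : ℝ) :
    min (1/2 : ℝ) (a/4) * ‖w‖ ≤ ‖w - t • u‖ := by
  rcases le_or_gt (|t| * ‖u‖) (‖w‖ / 2) with h | h
  · have h1 : ‖w‖ - ‖t • u‖ ≤ ‖w - t • u‖ := norm_sub_norm_le _ _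
    have h2 : ‖t • u‖ = |t| * ‖u‖ := by rw [norm_smul, Real.norm_eq_abs]
    have h3 : min (1/2 : ℝ) (a/4) * ‖w‖ ≤ 1/2 * ‖w‖ :=
      mul_le_mul_of_nonneg_right (min_le_left _ _) (norm_nonneg _)
    linarith
  · have h1 : ‖Q (w - t • u)‖ ≤ ‖w - t • u‖ := hQ _
    have h2 : ‖t • Q u‖ - ‖Q w‖ ≤ ‖Q (w - t • u)‖ := by
      have := norm_sub_norm_le (t • Q u) (Q w)
      rw [norm_sub_rev] at this
      have he : Q (w - t • u) = Q w - t • Q u := by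
        rw [map_sub, Q.map_smul]
      rw [he]; exact this
    have h3 : ‖t • Q u‖ = |t| * ‖Q u‖ := by rw [norm_smul, Real.norm_eq_abs]
    have h4 : |t| * (a * ‖u‖) ≤ |t| * ‖Q u‖ :=
      mul_le_mul_of_nonneg_left hu (abs_nonneg t)
    have h5 : a * (‖w‖ / 2) ≤ |t| * (a * ‖u‖) := by nlinarith [abs_nonneg t]
    have h6 : min (1/2 : ℝ) (a/4) * ‖w‖ ≤ a/4 * ‖w‖ :=
      mul_le_mul_of_nonneg_right (min_le_right _ _) (norm_nonneg _)
    nlinarith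

end Aux


set_option maxHeartbeats 4000000 in
open Module in
/-- If `f : ℝᵐ → ℝⁿ` is a `C¹` embedding whose derivative at `x₀` has rank `m`, and
`x` lies outside the affine tangent plane `T = f(x₀) + f'(x₀)ℝᵐ`, then the radial projection
`π_x` is bilipschitz on `f(ℝᵐ) ∩ B(f(x₀), δ)` for some `δ > 0`. -/
theorem stmt2 {n m : ℕ} (hm : 0 < m) (hmn : m < n)
    (f : EuclideanSpace ℝ (Fin m) → EuclideanSpace ℝ (Fin n)) (hf : IsC1Embedding f)
    (x₀ : EuclideanSpace ℝ (Fin m))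
    (hrank : Module.finrank ℝ (LinearMap.range (fderiv ℝ f x₀ : EuclideanSpace ℝ (Fin m) →ₗ[ℝ] EuclideanSpace ℝ (Fin n))) = m)
    (x : EuclideanSpace ℝ (Fin n))
    (hx : x ∉ (fun w => f x₀ + w) ''
      ((LinearMap.range (fderiv ℝ f x₀ : EuclideanSpace ℝ (Fin m) →ₗ[ℝ] EuclideanSpace ℝ (Fin n)) : Submodule ℝ (EuclideanSpace ℝ (Fin n))) :
        Set (EuclideanSpace ℝ (Fin n)))) :
    ∃ δ > 0, ∃ c C : ℝ, 0 < c ∧ c ≤ C ∧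
      ∀ y ∈ Set.range f ∩ ball (f x₀) δ, ∀ z ∈ Set.range f ∩ ball (f x₀) δ,
        c * ‖y - z‖ ≤ ‖radialProj x y - radialProj x z‖ ∧
        ‖radialProj x y - radialProj x z‖ ≤ C * ‖y - z‖ := by
  obtain ⟨hf1, hf2⟩ := hf
  set D : EuclideanSpace ℝ (Fin m) →L[ℝ] EuclideanSpace ℝ (Fin n) := fderiv ℝ f x₀ with hD
  set W : Submodule ℝ (EuclideanSpace ℝ (Fin n)) := LinearMap.range (D : EuclideanSpace ℝ (Fin m) →ₗ[ℝ] EuclideanSpace ℝ (Fin n)) with hWdef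
  -- basic facts about x and the tangent plane
  have hxW : x - f x₀ ∉ W := fun h => hx ⟨x - f x₀, h, by simp⟩
  set Q : EuclideanSpace ℝ (Fin n) →L[ℝ] EuclideanSpace ℝ (Fin n) :=
    Wᗮ.subtypeL.comp (Submodule.orthogonalProjection Wᗮ) with hQdef
  have hQnorm : ∀ v, ‖Q v‖ ≤ ‖v‖ := by
    intro v
    have h1 : ‖Submodule.orthogonalProjection Wᗮ v‖ ≤ ‖Submodule.orthogonalProjection Wᗮ‖ * ‖v‖ :=
      (Submodule.orthogonalProjection Wᗮ).le_opNorm v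
    have h2 : ‖Submodule.orthogonalProjection Wᗮ‖ ≤ 1 := Submodule.orthogonalProjection_norm_le _
    have h3 : ‖Q v‖ = ‖Submodule.orthogonalProjection Wᗮ v‖ := rfl
    nlinarith [norm_nonneg v, norm_nonneg (Submodule.orthogonalProjection Wᗮ v)]
  have hQW : ∀ w, w ∈ W → Q w = 0 := by
    intro w hw
    have h1 : Submodule.orthogonalProjection Wᗮ w = 0 :=
      Submodule.orthogonalProjectionOnto_apply_of_mem_orthogonal
        (W.le_orthogonal_orthogonal hw)
    show (Wᗮ.subtypeL : Wᗮ →L[ℝ] _) (Submodule.orthogonalProjection Wᗮ w) = 0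
    rw [h1]; simp
  have hQx : Q (x - f x₀) ≠ 0 := by
    intro h0
    apply hxW
    have h0' : Submodule.orthogonalProjection Wᗮ (x - f x₀) = 0 := Subtype.ext h0
    have hmem : (x - f x₀) - (Submodule.orthogonalProjection Wᗮ (x - f x₀) : EuclideanSpace ℝ (Fin n)) ∈ Wᗮᗮ :=
      Submodule.sub_starProjection_mem_orthogonal _
    rw [h0'] at hmem
    simp only [Submodule.coe_zero, sub_zero] at hmem
    rwa [Submodule.orthogonal_orthogonal] at hmem
  set d : ℝ := ‖x - f x₀‖ with hddef
  have hd : 0 < d := by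
    rw [hddef, norm_pos_iff]
    intro h
    exact hxW (h ▸ W.zero_mem)
  set a₀ : ℝ := ‖Q (x - f x₀)‖ with ha₀def
  have ha₀ : 0 < a₀ := norm_pos_iff.mpr hQx
  set a : ℝ := a₀ / (3 * d) with hadef
  have ha : 0 < a := div_pos ha₀ (by linarith)
  -- antilipschitz constant for D
  have hker : LinearMap.ker ((D : EuclideanSpace ℝ (Fin m) →ₗ[ℝ] EuclideanSpace ℝ (Fin n))) = ⊥ := by
    have h1 := LinearMap.finrank_range_add_finrank_ker
      ((D : EuclideanSpace ℝ (Fin m) →ₗ[ℝ] EuclideanSpace ℝ (Fin n)))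
    rw [finrank_euclideanSpace_fin] at h1
    have h2 : LinearMap.range ((D : EuclideanSpace ℝ (Fin m) →ₗ[ℝ] EuclideanSpace ℝ (Fin n)))
        = W := rfl
    rw [h2, hrank] at h1
    have h3 : Module.finrank ℝ
        (LinearMap.ker ((D : EuclideanSpace ℝ (Fin m) →ₗ[ℝ] EuclideanSpace ℝ (Fin n)))) = 0 := by
      omega
    exact Submodule.finrank_eq_zero.mp h3
  obtain ⟨K, hK0, hKa⟩ := LinearMap.exists_antilipschitzWith _ hker
  set b : ℝ := (K : ℝ)⁻¹ with hbdef
  have hKpos : (0:ℝ) < (K:ℝ) := hK0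
  have hb : 0 < b := inv_pos.mpr hKpos
  have hbD : ∀ h : EuclideanSpace ℝ (Fin m), b * ‖h‖ ≤ ‖D h‖ := by
    intro h
    have h1 := hKa.le_mul_dist h 0
    simp only [dist_eq_norm, sub_zero, map_zero, LinearMap.coe_coe] at h1
    have h2 : ‖h‖ ≤ (K:ℝ) * ‖D h‖ := by
      simpa using h1
    rw [hbdef, inv_mul_le_iff₀ hKpos]
    rwa [mul_comm] at h2
  -- choose ρ by continuity of the derivative
  set ε' : ℝ := min (b / 2) (a / 4 * b / 2) with hε'def
  have hε' : 0 < ε' := lt_min (by linarith) (by nlinarith)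
  have hcont : ContinuousAt (fderiv ℝ f) x₀ := (hf1.continuous_fderiv one_ne_zero).continuousAt
  have hev : ∀ᶠ ξ in nhds x₀, dist (fderiv ℝ f ξ) D < ε' :=
    Metric.tendsto_nhds.mp hcont ε' hε'
  obtain ⟨ρ, hρ0, hρ⟩ := Metric.eventually_nhds_iff.mp hev
  -- chord estimate
  have chord : ∀ y' z' : EuclideanSpace ℝ (Fin m), y' ∈ ball x₀ ρ → z' ∈ ball x₀ ρ →
      ‖Q (f z' - f y')‖ ≤ a / 4 * ‖f z' - f y'‖ := by
    intro y' z' hy hz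
    have hbound : ∀ ξ ∈ ball x₀ ρ, ‖fderiv ℝ f ξ - D‖ ≤ ε' := by
      intro ξ hξ
      have := hρ (mem_ball.mp hξ)
      rw [dist_eq_norm] at this
      exact this.le
    have hmv : ‖f z' - f y' - D (z' - y')‖ ≤ ε' * ‖z' - y'‖ :=
      (convex_ball x₀ ρ).norm_image_sub_le_of_norm_fderiv_le'
        (fun ξ _ => (hf1.differentiable one_ne_zero).differentiableAt) hbound hy hz
    have h1 : ‖D (z' - y')‖ - ‖f z' - f y' - D (z' - y')‖ ≤ ‖f z' - f y'‖ := by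
      have heq : f z' - f y' - (f z' - f y' - D (z' - y')) = D (z' - y') := by abel
      have h2 : ‖D (z' - y')‖ = ‖(f z' - f y') - (f z' - f y' - D (z' - y'))‖ := by
        rw [heq]
      have h3 := norm_sub_le (f z' - f y') (f z' - f y' - D (z' - y'))
      linarith [h2 ▸ h3]
    have hε'1 : ε' ≤ b / 2 := min_le_left _ _
    have hε'2 : ε' ≤ a / 4 * b / 2 := min_le_right _ _
    have h2 : (b / 2) * ‖z' - y'‖ ≤ ‖f z' - f y'‖ := by
      have := hbD (z' - y')
      nlinarith [norm_nonneg (z' - y')]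
    have h3 : ‖Q (f z' - f y')‖ ≤ ε' * ‖z' - y'‖ := by
      have hQeq : Q (f z' - f y' - D (z' - y')) = Q (f z' - f y') := by
        rw [map_sub Q (f z' - f y') (D (z' - y')), hQW (D (z' - y')) ⟨z' - y', rfl⟩, sub_zero]
      rw [← hQeq]
      exact le_trans (hQnorm _) hmv
    nlinarith [norm_nonneg (z' - y'), norm_nonneg (f z' - f y'),
      norm_nonneg (Q (f z' - f y'))]
  -- choose δ using the embedding property
  have hball : ball x₀ ρ ∈ nhds x₀ := ball_mem_nhds _ hρ0
  rw [hf2.toIsInducing.nhds_eq_comap, Filter.mem_comap] at hball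
  obtain ⟨s, hs, hsub⟩ := hball
  obtain ⟨δ₁, hδ₁0, hδ₁sub⟩ := Metric.mem_nhds_iff.mp hs
  set δ : ℝ := min δ₁ (min (a₀ / 2) (d / 2)) with hδdef
  have hδ0 : 0 < δ := lt_min hδ₁0 (lt_min (by linarith) (by linarith))
  have hδa₀ : δ ≤ a₀ / 2 := le_trans (min_le_right _ _) (min_le_left _ _)
  have hδd : δ ≤ d / 2 := le_trans (min_le_right _ _) (min_le_right _ _)
  have hδδ₁ : δ ≤ δ₁ := min_le_left _ _
  -- facts about points in the ball
  have hpt : ∀ w ∈ ball (f x₀) δ, d / 2 ≤ ‖w - x‖ ∧ ‖w - x‖ ≤ 2 * d ∧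
      a * ‖w - x‖ ≤ ‖Q (w - x)‖ := by
    intro w hw
    rw [mem_ball, dist_eq_norm] at hw
    have heq : w - x = (w - f x₀) - (x - f x₀) := by abel
    have hlow : d - δ ≤ ‖w - x‖ := by
      rw [heq]
      have := norm_sub_norm_le (x - f x₀) (w - f x₀)
      rw [norm_sub_rev ((x - f x₀)) ((w - f x₀))] at this
      linarith [this, hw.le]
    have hhigh : ‖w - x‖ ≤ d + δ := by
      rw [heq]
      calc ‖(w - f x₀) - (x - f x₀)‖ ≤ ‖w - f x₀‖ + ‖x - f x₀‖ := norm_sub_le _ _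
        _ ≤ d + δ := by linarith [hw.le]
    have hQlow : a₀ - δ ≤ ‖Q (w - x)‖ := by
      have heq2 : Q (w - x) = Q (w - f x₀) - Q (x - f x₀) := by rw [heq, map_sub]
      rw [heq2]
      have h4 := norm_sub_norm_le (Q (x - f x₀)) (Q (w - f x₀))
      rw [norm_sub_rev (Q (x - f x₀)) (Q (w - f x₀))] at h4
      have h5 := hQnorm (w - f x₀)
      linarith [hw.le]
    refine ⟨by linarith, by linarith, ?_⟩
    have h6 : a * ‖w - x‖ ≤ a₀ / (3 * d) * (d + δ) := by
      rw [hadef]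
      exact mul_le_mul_of_nonneg_left hhigh (by positivity)
    have h7 : a₀ / (3 * d) * (d + δ) ≤ a₀ / 2 := by
      rw [div_mul_eq_mul_div, div_le_div_iff₀ (by linarith) (by norm_num)]
      nlinarith
    linarith
  -- the constants
  have hcpos : 0 < min (1/2 : ℝ) (a/4) / (2 * d) :=
    div_pos (lt_min (by norm_num) (by linarith)) (by linarith)
  refine ⟨δ, hδ0, min (1/2 : ℝ) (a/4) / (2 * d), 4 / d, hcpos, ?_, ?_⟩
  · have h1 : min (1/2 : ℝ) (a/4) ≤ 1/2 := min_le_left _ _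
    rw [div_le_div_iff₀ (by linarith) hd]
    nlinarith
  rintro y ⟨⟨y', rfl⟩, hyb⟩ z ⟨⟨z', rfl⟩, hzb⟩
  have hyρ : y' ∈ ball x₀ ρ := hsub (hδ₁sub (mem_ball.mpr (lt_of_lt_of_le (mem_ball.mp hyb) hδδ₁)))
  have hzρ : z' ∈ ball x₀ ρ := hsub (hδ₁sub (mem_ball.mpr (lt_of_lt_of_le (mem_ball.mp hzb) hδδ₁)))
  obtain ⟨hyl, hyh, hyQ⟩ := hpt (f y') hyb
  obtain ⟨hzl, hzh, hzQ⟩ := hpt (f z') hzb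
  have hu0 : f y' - x ≠ 0 := by
    intro h; rw [h, norm_zero] at hyl; linarith
  have hv0 : f z' - x ≠ 0 := by
    intro h; rw [h, norm_zero] at hzl; linarith
  have hπ : radialProj x (f y') - radialProj x (f z')
      = ‖f y' - x‖⁻¹ • (f y' - x) - ‖f z' - x‖⁻¹ • (f z' - x) := rfl
  constructor
  · -- lower bound
    obtain ⟨t, ht⟩ := aux_lower (f y' - x) (f z' - x) hu0 hv0
    have hweq : f z' - x - t • (f y' - x) = (f z' - f y') - (t - 1) • (f y' - x) := by
      rw [sub_smul, one_smul]; abel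
    have hseg := aux_seg a ha (f y' - x) (f z' - f y') Q hQnorm hyQ
      (chord y' z' hyρ hzρ) (t - 1)
    rw [← hweq] at hseg
    have hchain : min (1/2 : ℝ) (a/4) * ‖f z' - f y'‖ ≤ (2 * d) * ‖radialProj x (f y') - radialProj x (f z')‖ := by
      have h8 : ‖f z' - x‖ * ‖‖f y' - x‖⁻¹ • (f y' - x) - ‖f z' - x‖⁻¹ • (f z' - x)‖
          ≤ (2 * d) * ‖radialProj x (f y') - radialProj x (f z')‖ := by
        rw [hπ]
        exact mul_le_mul_of_nonneg_right hzh (norm_nonneg _)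
      linarith [le_trans hseg ht]
    have hnorm_rev : ‖f y' - f z'‖ = ‖f z' - f y'‖ := norm_sub_rev _ _
    rw [hnorm_rev, div_mul_eq_mul_div, div_le_iff₀ (by linarith)]
    linarith [hchain]
  · -- upper bound
    have hup := aux_upper (f y' - x) (f z' - x) hu0 hv0
    have heq : (f y' - x) - (f z' - x) = f y' - f z' := by abel
    rw [heq] at hup
    rw [hπ]
    refine le_trans hup ?_
    have h9 : 2 / ‖f y' - x‖ ≤ 4 / d := by
      rw [div_le_div_iff₀ (by linarith) hd]
      nlinarith
    exact mul_le_mul_of_nonneg_right h9 (norm_nonneg _)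
end

section
/- Let n, m be positive integers with m < n. Let f : ℝᵐ → ℝⁿ be a C¹ embedding, let x₀ ∈ ℝᵐ, set z₀ = f(x₀), and assume the derivative f'(x₀) has rank m. Let P_T denote the orthogonal projection of ℝⁿ onto the linear subspace f'(x₀)ℝᵐ. Then for every ε > 0 there exists δ > 0 such that |P_T(y − z)| ≥ (1 − ε)|y − z| for all y, z ∈ f(ℝᵐ) ∩ B(z₀, δ). -/
open MeasureTheory Metric Set
open scoped ENNReal

set_option maxHeartbeats 1000000

/-- If `f : ℝᵐ → ℝⁿ` is a `C¹` embedding whose derivative at `x₀` has rank `m`, then for every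
`ε > 0` there is `δ > 0` with `‖P_T(y − z)‖ ≥ (1 − ε)‖y − z‖` for all
`y, z ∈ f(ℝᵐ) ∩ B(f(x₀), δ)`, where `P_T` is the orthogonal projection onto `f'(x₀)ℝᵐ`. -/
theorem stmt3 {n m : ℕ} (hm : 0 < m) (hmn : m < n)
    (f : EuclideanSpace ℝ (Fin m) → EuclideanSpace ℝ (Fin n)) (hf : IsC1Embedding f)
    (x₀ : EuclideanSpace ℝ (Fin m))
    (hrank : Module.finrank ℝ (LinearMap.range (fderiv ℝ f x₀).toLinearMap) = m) :
    ∀ ε > (0 : ℝ), ∃ δ > (0 : ℝ),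
      ∀ y ∈ Set.range f ∩ ball (f x₀) δ, ∀ z ∈ Set.range f ∩ ball (f x₀) δ,
        (1 - ε) * ‖y - z‖ ≤
          ‖(Submodule.orthogonalProjectionOnto (LinearMap.range (fderiv ℝ f x₀).toLinearMap) (y - z) :
            EuclideanSpace ℝ (Fin n))‖ := by
  intro ε hε
  set L := fderiv ℝ f x₀ with hLdef
  set T := LinearMap.range L.toLinearMap with hTdef
  -- injectivity of L and antilipschitz constant
  have hker : LinearMap.ker (L : EuclideanSpace ℝ (Fin m) →ₗ[ℝ] EuclideanSpace ℝ (Fin n)) = ⊥ := by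
    have h1 : Module.finrank ℝ (LinearMap.range (L : EuclideanSpace ℝ (Fin m) →ₗ[ℝ] EuclideanSpace ℝ (Fin n)))
        + Module.finrank ℝ (LinearMap.ker (L : EuclideanSpace ℝ (Fin m) →ₗ[ℝ] EuclideanSpace ℝ (Fin n)))
        = Module.finrank ℝ (EuclideanSpace ℝ (Fin m)) :=
      LinearMap.finrank_range_add_finrank_ker _
    have h2 : Module.finrank ℝ (EuclideanSpace ℝ (Fin m)) = m := finrank_euclideanSpace_fin
    have h3 : Module.finrank ℝ (LinearMap.range (L : EuclideanSpace ℝ (Fin m) →ₗ[ℝ] EuclideanSpace ℝ (Fin n))) = m := hrank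
    have h4 : Module.finrank ℝ (LinearMap.ker (L : EuclideanSpace ℝ (Fin m) →ₗ[ℝ] EuclideanSpace ℝ (Fin n))) = 0 := by omega
    exact Submodule.finrank_eq_zero.mp h4
  obtain ⟨K, hK, hanti⟩ :=
    LinearMap.exists_antilipschitzWith (L : EuclideanSpace ℝ (Fin m) →ₗ[ℝ] EuclideanSpace ℝ (Fin n)) hker
  have hKv : ∀ v : EuclideanSpace ℝ (Fin m), ‖v‖ ≤ K * ‖L v‖ := by
    intro v
    have := hanti.le_mul_dist v 0
    simpa [dist_eq_norm] using this
  -- choose η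
  set η : ℝ := min (1 / (2 * K)) (ε / (4 * K)) with hηdef
  have hKpos : (0 : ℝ) < K := hK
  have hηpos : 0 < η := by
    apply lt_min <;> positivity
  have hη1 : η * K ≤ 1 / 2 := by
    have : η ≤ 1 / (2 * K) := min_le_left _ _
    calc η * K ≤ (1 / (2 * K)) * K := by nlinarith
    _ = 1 / 2 := by field_simp
  have hη2 : 4 * η * K ≤ ε := by
    have : η ≤ ε / (4 * K) := min_le_right _ _
    calc 4 * η * K ≤ 4 * (ε / (4 * K)) * K := by nlinarith
    _ = ε := by field_simp
  -- derivative continuity: choose r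
  have hcont : Continuous (fderiv ℝ f) := hf.1.continuous_fderiv one_ne_zero
  have htend : Filter.Tendsto (fderiv ℝ f) (nhds x₀) (nhds L) := hcont.tendsto x₀
  have : Metric.ball L η ∈ nhds L := Metric.ball_mem_nhds _ hηpos
  obtain ⟨r, hr, hrball⟩ := Metric.mem_nhds_iff.mp (htend this)
  have hderiv : ∀ x ∈ ball x₀ r, ‖fderiv ℝ f x - L‖ ≤ η := by
    intro x hx
    have := hrball hx
    simp only [Set.mem_preimage, Metric.mem_ball, dist_eq_norm] at this
    exact this.le
  -- embedding: choose δ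
  have hnhds : ball x₀ r ∈ nhds x₀ := Metric.ball_mem_nhds _ hr
  rw [hf.2.toIsInducing.nhds_eq_comap, Filter.mem_comap] at hnhds
  obtain ⟨t, ht, hts⟩ := hnhds
  obtain ⟨δ, hδ, hδt⟩ := Metric.mem_nhds_iff.mp ht
  refine ⟨δ, hδ, ?_⟩
  rintro y ⟨⟨a, rfl⟩, hy⟩ z ⟨⟨b, rfl⟩, hz⟩
  have ha : a ∈ ball x₀ r := hts (hδt hy)
  have hb : b ∈ ball x₀ r := hts (hδt hz)
  -- mean value estimate for g = f - L
  have hR : ‖(f a - L a) - (f b - L b)‖ ≤ η * ‖a - b‖ := by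
    have hconv : Convex ℝ (ball x₀ r) := convex_ball _ _
    refine hconv.norm_image_sub_le_of_norm_hasFDerivWithin_le
      (f := fun x => f x - L x) (f' := fun x => fderiv ℝ f x - L) ?_ ?_ hb ha
    · intro x hx
      exact (((hf.1.differentiable one_ne_zero).differentiableAt.hasFDerivAt).sub
        (L.hasFDerivAt)).hasFDerivWithinAt
    · intro x hx
      exact hderiv x hx
  set R := (f a - f b) - L (a - b) with hRdef
  have hReq : R = (f a - L a) - (f b - L b) := by
    rw [hRdef, map_sub]; abel
  have hRle : ‖R‖ ≤ η * ‖a - b‖ := by rw [hReq]; exact hR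
  -- ‖a - b‖ ≤ 2K‖f a - f b‖
  have hab : ‖a - b‖ ≤ 2 * K * ‖f a - f b‖ := by
    have h1 : ‖a - b‖ ≤ K * ‖L (a - b)‖ := hKv _
    have h2 : ‖L (a - b)‖ ≤ ‖f a - f b‖ + ‖R‖ := by
      have : L (a - b) = (f a - f b) - R := by rw [hRdef]; abel
      rw [this]
      exact norm_sub_le _ _
    have h3 : K * ‖L (a-b)‖ ≤ K * ‖f a - f b‖ + (η * K) * ‖a - b‖ := by nlinarith
    nlinarith [norm_nonneg (a - b), norm_nonneg (f a - f b)]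
  -- projection
  set P := Submodule.orthogonalProjectionOnto T with hPdef
  have hPL : (P (L (a - b)) : EuclideanSpace ℝ (Fin n)) = L (a - b) :=
    Submodule.starProjection_eq_self_iff.mpr (LinearMap.mem_range_self _ _)
  have hPnorm : ∀ w : EuclideanSpace ℝ (Fin n), ‖(P w : EuclideanSpace ℝ (Fin n))‖ ≤ ‖w‖ := by
    intro w
    have := (Submodule.orthogonalProjectionOnto T).le_opNorm w
    calc ‖(P w : EuclideanSpace ℝ (Fin n))‖ ≤ ‖Submodule.orthogonalProjectionOnto T‖ * ‖w‖ := this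
    _ ≤ 1 * ‖w‖ := by
        have := Submodule.orthogonalProjectionOnto_norm_le T
        nlinarith [norm_nonneg w]
    _ = ‖w‖ := one_mul _
  have hsplit : f a - f b = L (a - b) + R := by rw [hRdef]; abel
  have hPsum : (P (f a - f b) : EuclideanSpace ℝ (Fin n)) = L (a - b) + (P R : EuclideanSpace ℝ (Fin n)) := by
    rw [hsplit, map_add]
    push_cast
    rw [hPL]
  have hdiff : (f a - f b) - (P (f a - f b) : EuclideanSpace ℝ (Fin n)) = R - (P R : EuclideanSpace ℝ (Fin n)) := by
    rw [hPsum, hsplit]; abel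
  have hkey : ‖(f a - f b) - (P (f a - f b) : EuclideanSpace ℝ (Fin n))‖ ≤ ε * ‖f a - f b‖ := by
    rw [hdiff]
    calc ‖R - (P R : EuclideanSpace ℝ (Fin n))‖ ≤ ‖R‖ + ‖(P R : EuclideanSpace ℝ (Fin n))‖ := norm_sub_le _ _
    _ ≤ 2 * ‖R‖ := by linarith [hPnorm R]
    _ ≤ 2 * (η * ‖a - b‖) := by linarith [hRle]
    _ ≤ 2 * η * (2 * K * ‖f a - f b‖) := by
        have := mul_le_mul_of_nonneg_left hab (by positivity : (0:ℝ) ≤ 2 * η)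
        linarith
    _ = (4 * η * K) * ‖f a - f b‖ := by ring
    _ ≤ ε * ‖f a - f b‖ := mul_le_mul_of_nonneg_right hη2 (norm_nonneg _)
  have htri : ‖f a - f b‖ ≤ ‖(P (f a - f b) : EuclideanSpace ℝ (Fin n))‖ +
      ‖(f a - f b) - (P (f a - f b) : EuclideanSpace ℝ (Fin n))‖ := by
    have h := norm_add_le ((P (f a - f b) : EuclideanSpace ℝ (Fin n)))
      ((f a - f b) - (P (f a - f b) : EuclideanSpace ℝ (Fin n)))
    have h2 : (P (f a - f b) : EuclideanSpace ℝ (Fin n)) +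
        ((f a - f b) - (P (f a - f b) : EuclideanSpace ℝ (Fin n))) = f a - f b := by abel
    rw [h2] at h
    exact h
  linarith [hkey, htri]
end

section
/- Let n, m be positive integers with m < n. Let f : ℝᵐ → ℝⁿ be a C¹ embedding, let x₀ ∈ ℝᵐ, set z₀ = f(x₀), and assume f'(x₀) has rank m. Let T = z₀ + f'(x₀)ℝᵐ and let x ∈ ℝⁿ with x ∉ T. Then there exist δ > 0 and c > 0 such that for all y, z ∈ f(ℝᵐ) ∩ B(z₀, δ), the angle γ(y, z) between the vectors y − x and z − x satisfies γ(y, z) ≥ c|y − z|. -/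
open MeasureTheory Metric Set
open scoped ENNReal

open InnerProductGeometry
open scoped RealInnerProductSpace

section AuxLemmas

variable {V : Type*} [NormedAddCommGroup V] [InnerProductSpace ℝ V]

/-- sin of the angle formula -/
lemma sin_angle_eq_aux {u v : V} (hu : u ≠ 0) (hv : v ≠ 0) :
    ‖v - ⟪(‖u‖⁻¹ • u : V), v⟫ • (‖u‖⁻¹ • u)‖ = ‖v‖ * Real.sin (angle u v) := by
  set uhat : V := ‖u‖⁻¹ • u with huhatdef
  have hun : (0:ℝ) < ‖u‖ := norm_pos_iff.mpr hu
  have huhat : ‖uhat‖ = 1 := norm_smul_inv_norm hu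
  set s : ℝ := ⟪uhat, v⟫ with hs
  have h2 : ⟪u, v⟫ = ‖u‖ * s := by
    rw [hs, huhatdef, real_inner_smul_left]
    field_simp
  have h1 : ‖v - s • uhat‖ ^ 2 = ‖v‖ ^ 2 - s ^ 2 := by
    rw [norm_sub_sq_real, real_inner_smul_right, real_inner_comm uhat v, norm_smul,
      Real.norm_eq_abs, huhat, mul_one]
    nlinarith [hs, sq_abs s]
  have hnn : (0:ℝ) ≤ ‖v‖ ^ 2 - s ^ 2 := h1 ▸ sq_nonneg _
  have key := sin_angle_mul_norm_mul_norm u v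
  rw [real_inner_self_eq_norm_sq, real_inner_self_eq_norm_sq, h2] at key
  have hsq : √(‖u‖ ^ 2 * (‖v‖ ^ 2 - s ^ 2)) = ‖u‖ * ‖v - s • uhat‖ := by
    rw [Real.sqrt_mul (sq_nonneg _), Real.sqrt_sq (norm_nonneg _), ← h1,
      Real.sqrt_sq (norm_nonneg _)]
  have key2 : Real.sin (angle u v) * (‖u‖ * ‖v‖) = ‖u‖ * ‖v - s • uhat‖ := by
    rw [key, ← hsq]; ring_nf
  have hc := mul_left_cancel₀ (ne_of_gt hun)
    (by linarith [key2] : ‖u‖ * (Real.sin (angle u v) * ‖v‖) = ‖u‖ * ‖v - s • uhat‖)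
  rw [← hc]; ring

/-- normalized difference bound -/
lemma unit_diff_aux {u e : V} (hu : u ≠ 0) (he : e ≠ 0) :
    ‖(‖u‖⁻¹ • u : V) - ‖e‖⁻¹ • e‖ ≤ 2 * ‖u - e‖ / ‖u‖ := by
  have hun : (0:ℝ) < ‖u‖ := norm_pos_iff.mpr hu
  have hen : (0:ℝ) < ‖e‖ := norm_pos_iff.mpr he
  have hid : (‖u‖⁻¹ • u : V) - ‖e‖⁻¹ • e = ‖u‖⁻¹ • (u - e) + (‖u‖⁻¹ - ‖e‖⁻¹) • e := by
    rw [smul_sub, sub_smul]; abel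
  rw [hid]
  have h2 : ‖((‖u‖⁻¹ - ‖e‖⁻¹ : ℝ) • e : V)‖ ≤ ‖u - e‖ / ‖u‖ := by
    rw [norm_smul, Real.norm_eq_abs]
    have hr : (‖u‖⁻¹ - ‖e‖⁻¹ : ℝ) = (‖e‖ - ‖u‖) / (‖u‖ * ‖e‖) := by field_simp
    rw [hr, abs_div, abs_of_pos (mul_pos hun hen)]
    have habs : |‖e‖ - ‖u‖| ≤ ‖u - e‖ := by
      rw [abs_sub_comm]; exact abs_norm_sub_norm_le u e
    have heq : |‖e‖ - ‖u‖| / (‖u‖ * ‖e‖) * ‖e‖ = |‖e‖ - ‖u‖| / ‖u‖ := by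
      field_simp
    rw [heq]
    exact div_le_div_of_nonneg_right habs hun.le |>.trans (le_of_eq rfl)
  calc ‖(‖u‖⁻¹ • (u - e) : V) + (‖u‖⁻¹ - ‖e‖⁻¹) • e‖
      ≤ ‖(‖u‖⁻¹ • (u - e) : V)‖ + ‖((‖u‖⁻¹ - ‖e‖⁻¹:ℝ) • e : V)‖ := norm_add_le _ _
    _ ≤ ‖u - e‖ / ‖u‖ + ‖u - e‖ / ‖u‖ := by
        refine add_le_add ?_ h2
        rw [norm_smul, Real.norm_eq_abs, abs_of_pos (inv_pos.mpr hun), inv_mul_eq_div]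
    _ = 2 * ‖u - e‖ / ‖u‖ := by ring

/-- projection perturbation -/
lemma proj_pert_aux {a b d : V} (ha : ‖a‖ = 1) (hb : ‖b‖ = 1) :
    ‖(⟪a, d⟫ • a : V) - ⟪b, d⟫ • b‖ ≤ 2 * ‖a - b‖ * ‖d‖ := by
  have hid : (⟪a, d⟫ • a : V) - ⟪b, d⟫ • b = ⟪a - b, d⟫ • a + ⟪b, d⟫ • (a - b) := by
    rw [inner_sub_left, sub_smul, smul_sub]; abel
  rw [hid]
  calc ‖(⟪a - b, d⟫ • a : V) + ⟪b, d⟫ • (a - b)‖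
      ≤ ‖(⟪a - b, d⟫ • a : V)‖ + ‖(⟪b, d⟫ • (a - b) : V)‖ := norm_add_le _ _
    _ ≤ ‖a - b‖ * ‖d‖ + ‖d‖ * ‖a - b‖ := by
        refine add_le_add ?_ ?_
        · rw [norm_smul, ha, mul_one, Real.norm_eq_abs]
          exact (abs_real_inner_le_norm _ _)
        · rw [norm_smul, Real.norm_eq_abs]
          exact mul_le_mul_of_nonneg_right
            ((abs_real_inner_le_norm b d).trans (by rw [hb, one_mul])) (norm_nonneg _)
    _ = 2 * ‖a - b‖ * ‖d‖ := by ring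

end AuxLemmas

set_option maxHeartbeats 2000000 in
/-- If `f : ℝᵐ → ℝⁿ` is a `C¹` embedding whose derivative at `x₀` has rank `m`, and `x` lies
outside the affine tangent plane `T = f(x₀) + f'(x₀)ℝᵐ`, then there are `δ, c > 0` such that
the angle at `x` subtended by `y, z ∈ f(ℝᵐ) ∩ B(f(x₀), δ)` is at least `c‖y − z‖`. -/
theorem stmt4 {n m : ℕ} (hm : 0 < m) (hmn : m < n)
    (f : EuclideanSpace ℝ (Fin m) → EuclideanSpace ℝ (Fin n)) (hf : IsC1Embedding f)
    (x₀ : EuclideanSpace ℝ (Fin m))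
    (hrank : Module.finrank ℝ (LinearMap.range (fderiv ℝ f x₀ : EuclideanSpace ℝ (Fin m) →ₗ[ℝ] EuclideanSpace ℝ (Fin n))) = m)
    (x : EuclideanSpace ℝ (Fin n))
    (hx : x ∉ (fun w => f x₀ + w) ''
      ((LinearMap.range (fderiv ℝ f x₀ : EuclideanSpace ℝ (Fin m) →ₗ[ℝ] EuclideanSpace ℝ (Fin n)) : Submodule ℝ (EuclideanSpace ℝ (Fin n))) :
        Set (EuclideanSpace ℝ (Fin n)))) :
    ∃ δ > (0 : ℝ), ∃ c > (0 : ℝ),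
      ∀ y ∈ Set.range f ∩ ball (f x₀) δ, ∀ z ∈ Set.range f ∩ ball (f x₀) δ,
        c * ‖y - z‖ ≤ InnerProductGeometry.angle (y - x) (z - x) := by
  classical
  set D := fderiv ℝ f x₀ with hDdef
  set z₀ := f x₀ with hz₀def
  set W : Submodule ℝ (EuclideanSpace ℝ (Fin n)) := LinearMap.range (D : EuclideanSpace ℝ (Fin m) →ₗ[ℝ] EuclideanSpace ℝ (Fin n)) with hWdef
  -- basic facts about x, z₀, e
  have hxz : x - z₀ ∉ (W : Set (EuclideanSpace ℝ (Fin n))) := by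
    intro h
    exact hx ⟨x - z₀, h, by simp⟩
  set e := z₀ - x with hedef
  have he0 : e ≠ 0 := by
    intro h
    apply hxz
    rw [hedef] at h
    have hzx : z₀ = x := sub_eq_zero.mp h
    have hx0 : x - z₀ = 0 := by rw [hzx, sub_self]
    rw [hx0]
    exact W.zero_mem
  have hE : (0:ℝ) < ‖e‖ := norm_pos_iff.mpr he0
  have heW : e ∉ (W : Set (EuclideanSpace ℝ (Fin n))) := by
    intro h
    apply hxz
    have hxe : x - z₀ = -e := by rw [hedef]; abel
    rw [hxe]
    exact W.neg_mem h
  -- the derivative is injective, with an antilipschitz bound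
  have hrange_eq : LinearMap.range (D : EuclideanSpace ℝ (Fin m) →ₗ[ℝ]
      EuclideanSpace ℝ (Fin n)) = W := by
    ext v; simp [LinearMap.mem_range, hWdef]
  have hker : LinearMap.ker (D : EuclideanSpace ℝ (Fin m) →ₗ[ℝ]
      EuclideanSpace ℝ (Fin n)) = ⊥ := by
    have h1 := LinearMap.finrank_range_add_finrank_ker
      (D : EuclideanSpace ℝ (Fin m) →ₗ[ℝ] EuclideanSpace ℝ (Fin n))
    rw [hrange_eq, hrank, finrank_euclideanSpace_fin] at h1
    have h2 : Module.finrank ℝ (LinearMap.ker (D : EuclideanSpace ℝ (Fin m) →ₗ[ℝ]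
        EuclideanSpace ℝ (Fin n))) = 0 := by omega
    exact Submodule.finrank_eq_zero.mp h2
  obtain ⟨K, hK0, hKanti⟩ := LinearMap.exists_antilipschitzWith
    (D : EuclideanSpace ℝ (Fin m) →ₗ[ℝ] EuclideanSpace ℝ (Fin n)) hker
  set k : ℝ := (K : ℝ)⁻¹ with hkdef
  have hk : (0:ℝ) < k := by positivity
  have hDk : ∀ v : EuclideanSpace ℝ (Fin m), k * ‖v‖ ≤ ‖D v‖ := by
    intro v
    have h1 := hKanti.le_mul_dist v 0
    simp only [dist_eq_norm, sub_zero, map_zero] at h1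
    have hK0' : (0:ℝ) < (K:ℝ) := hK0
    rw [hkdef, inv_mul_le_iff₀ hK0']
    exact h1
  -- the projection away from ê and its minimum on the unit sphere of W
  set ehat : EuclideanSpace ℝ (Fin n) := ‖e‖⁻¹ • e with hehatdef
  have hehat : ‖ehat‖ = 1 := norm_smul_inv_norm he0
  set Qe : EuclideanSpace ℝ (Fin n) → EuclideanSpace ℝ (Fin n) :=
    fun w => w - ⟪ehat, w⟫ • ehat with hQedef
  have hQapp : ∀ w, Qe w = w - ⟪ehat, w⟫ • ehat := fun _ => rfl
  have hQadd : ∀ w w', Qe (w + w') = Qe w + Qe w' := by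
    intro w w'
    simp only [hQedef, inner_add_right, add_smul]
    abel
  have hQcont : Continuous Qe := by
    exact continuous_id.sub (by fun_prop)
  have hQsmul : ∀ (c : ℝ) w, Qe (c • w) = c • Qe w := by
    intro c w
    simp only [hQedef, real_inner_smul_right, smul_sub, smul_smul]
  have hQbound : ∀ w, ‖Qe w‖ ≤ 2 * ‖w‖ := by
    intro w
    calc ‖w - ⟪ehat, w⟫ • ehat‖ ≤ ‖w‖ + ‖(⟪ehat, w⟫ • ehat : EuclideanSpace ℝ (Fin n))‖ :=
          norm_sub_le _ _
      _ ≤ ‖w‖ + ‖w‖ := by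
          refine add_le_add le_rfl ?_
          rw [norm_smul, Real.norm_eq_abs, hehat, mul_one]
          exact (abs_real_inner_le_norm ehat w).trans (by rw [hehat, one_mul])
      _ = 2 * ‖w‖ := by ring
  have hWclosed : IsClosed (W : Set (EuclideanSpace ℝ (Fin n))) :=
    Submodule.closed_of_finiteDimensional W
  have hScpt : IsCompact ((W : Set (EuclideanSpace ℝ (Fin n))) ∩ sphere 0 1) :=
    (isCompact_sphere (0 : EuclideanSpace ℝ (Fin n)) 1).inter_left hWclosed
  have hSne : ((W : Set (EuclideanSpace ℝ (Fin n))) ∩ sphere 0 1).Nonempty := by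
    have hWne : W ≠ ⊥ := by
      intro h
      rw [h] at hrank
      simp [finrank_bot] at hrank
      omega
    obtain ⟨w0, hw0W, hw00⟩ := Submodule.exists_mem_ne_zero_of_ne_bot hWne
    refine ⟨‖w0‖⁻¹ • w0, W.smul_mem _ hw0W, ?_⟩
    rw [mem_sphere_zero_iff_norm]
    exact norm_smul_inv_norm hw00
  obtain ⟨w₁, hw₁, hmin⟩ := hScpt.exists_isMinOn hSne
    ((continuous_norm.comp hQcont).continuousOn)
  set ε : ℝ := ‖Qe w₁‖ with hεdef
  have hε : (0:ℝ) < ε := by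
    rcases (norm_nonneg (Qe w₁)).lt_or_eq with h | h
    · exact h
    · exfalso
      have hQ0 : Qe w₁ = 0 := by
        rw [← norm_eq_zero]; exact h.symm
      have hw₁eq : w₁ = ⟪ehat, w₁⟫ • ehat := by
        have := sub_eq_zero.mp hQ0
        exact this
      have hw₁n : ‖w₁‖ = 1 := mem_sphere_zero_iff_norm.mp hw₁.2
      have hcabs : |⟪ehat, w₁⟫| = 1 := by
        have := congrArg norm hw₁eq
        rw [hw₁n, norm_smul, Real.norm_eq_abs, hehat, mul_one] at this
        exact this.symm
      have hc0 : ⟪ehat, w₁⟫ ≠ 0 := by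
        intro h0; rw [h0] at hcabs; simp at hcabs
      have hehatW : ehat ∈ W := by
        have h7 : ehat = (⟪ehat, w₁⟫)⁻¹ • w₁ := (eq_inv_smul_iff₀ hc0).mpr hw₁eq.symm
        rw [h7]
        exact W.smul_mem _ hw₁.1
      apply heW
      have : (‖e‖ : ℝ) • ehat = e := by
        rw [hehatdef, smul_smul, mul_inv_cancel₀ (ne_of_gt hE), one_smul]
      rw [← this]
      exact W.smul_mem _ hehatW
  have hQlow : ∀ w ∈ W, ε * ‖w‖ ≤ ‖Qe w‖ := by
    intro w hw
    rcases eq_or_ne w 0 with h | h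
    · simp [h, hQapp]
    · have hwn : (0:ℝ) < ‖w‖ := norm_pos_iff.mpr h
      have hmem : ‖w‖⁻¹ • w ∈ (W : Set (EuclideanSpace ℝ (Fin n))) ∩ sphere 0 1 := by
        refine ⟨W.smul_mem _ hw, ?_⟩
        rw [mem_sphere_zero_iff_norm]
        exact norm_smul_inv_norm h
      have h1 : ε ≤ ‖Qe (‖w‖⁻¹ • w)‖ := hmin hmem
      rw [hQsmul, norm_smul, Real.norm_eq_abs, abs_of_pos (inv_pos.mpr hwn)] at h1
      calc ε * ‖w‖ ≤ ‖w‖⁻¹ * ‖Qe w‖ * ‖w‖ := by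
            exact mul_le_mul_of_nonneg_right h1 hwn.le
        _ = ‖Qe w‖ := by field_simp
  -- strict differentiability bound
  set η : ℝ := ε * k / 4 with hηdef
  have hη : (0:ℝ) < η := by positivity
  have hsd : HasStrictFDerivAt f D x₀ := (hf.1.contDiffAt).hasStrictFDerivAt one_ne_zero
  have hlo := hsd.isLittleO.def hη
  rw [Metric.eventually_nhds_iff] at hlo
  obtain ⟨r, hr0, hr⟩ := hlo
  -- embedding: preimage control
  have hmemb : ball x₀ r ∈ nhds x₀ := ball_mem_nhds _ hr0
  rw [hf.2.toIsInducing.nhds_eq_comap x₀, Filter.mem_comap] at hmemb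
  obtain ⟨t, ht, hts⟩ := hmemb
  rw [Metric.mem_nhds_iff] at ht
  obtain ⟨δ₁, hδ₁0, hδ₁⟩ := ht
  have hpull : ∀ a, f a ∈ ball z₀ δ₁ → a ∈ ball x₀ r := fun a ha => hts (hδ₁ ha)
  -- choose δ and c
  set M : ℝ := ‖D‖ with hMdef
  have hM0 : (0:ℝ) ≤ M := norm_nonneg _
  have hMη : (0:ℝ) < M + η := by positivity
  set δ : ℝ := min (min δ₁ (‖e‖ / 2)) (ε * k * ‖e‖ / (32 * (M + η))) with hδdef
  have hδ0 : (0:ℝ) < δ := by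
    refine lt_min (lt_min hδ₁0 (by positivity)) (by positivity)
  have hδa : δ ≤ δ₁ := (min_le_left _ _).trans (min_le_left _ _)
  have hδb : δ ≤ ‖e‖ / 2 := (min_le_left _ _).trans (min_le_right _ _)
  have hδc : δ ≤ ε * k * ‖e‖ / (32 * (M + η)) := min_le_right _ _
  set c : ℝ := ε * k / (8 * (M + η) * ‖e‖) with hcdef
  have hc0 : (0:ℝ) < c := by positivity
  refine ⟨δ, hδ0, c, hc0, ?_⟩
  rintro y ⟨⟨a, rfl⟩, hy⟩ z ⟨⟨b, rfl⟩, hz⟩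
  -- pull back to the domain
  have hya : f a ∈ ball z₀ δ₁ := mem_ball.mpr (lt_of_lt_of_le (mem_ball.mp hy) hδa)
  have hzb : f b ∈ ball z₀ δ₁ := mem_ball.mpr (lt_of_lt_of_le (mem_ball.mp hz) hδa)
  have ha : a ∈ ball x₀ r := hpull a hya
  have hb : b ∈ ball x₀ r := hpull b hzb
  -- notation
  set u := f a - x with hudef
  set v := f b - x with hvdef
  set d := f b - f a with hddef
  set B : ℝ := ‖b - a‖ with hBdef
  have hB0 : (0:ℝ) ≤ B := norm_nonneg _
  -- the strict derivative estimate
  have herr : ‖f b - f a - D (b - a)‖ ≤ η * B := by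
    have hd : dist (b, a) (x₀, x₀) < r := by
      rw [Prod.dist_eq]
      exact max_lt (mem_ball.mp hb) (mem_ball.mp ha)
    have h9 := hr hd
    simpa using h9
  set w := D (b - a) with hwdef
  have hwW : w ∈ W := by
    rw [hWdef]
    exact ⟨b - a, rfl⟩
  have hwlow : k * B ≤ ‖w‖ := hDk (b - a)
  have hwup : ‖w‖ ≤ M * B := D.le_opNorm (b - a)
  have hdu : ‖d‖ ≤ (M + η) * B := by
    have : d = w + (f b - f a - D (b - a)) := by rw [hwdef, hddef]; abel
    calc ‖d‖ = ‖w + (f b - f a - D (b - a))‖ := by rw [← this]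
      _ ≤ ‖w‖ + ‖f b - f a - D (b - a)‖ := norm_add_le _ _
      _ ≤ M * B + η * B := add_le_add hwup herr
      _ = (M + η) * B := by ring
  -- norms and distances of u, v
  have hfa : ‖f a - z₀‖ < δ := by rw [← dist_eq_norm]; exact mem_ball.mp hy
  have hfb : ‖f b - z₀‖ < δ := by rw [← dist_eq_norm]; exact mem_ball.mp hz
  have hue : u - e = f a - z₀ := by rw [hudef, hedef]; abel
  have hve : v - e = f b - z₀ := by rw [hvdef, hedef]; abel
  have hulow : ‖e‖ / 2 ≤ ‖u‖ := by
    have h1 : ‖e‖ ≤ ‖u‖ + ‖u - e‖ := by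
      calc ‖e‖ = ‖u - (u - e)‖ := by rw [sub_sub_cancel]
        _ ≤ ‖u‖ + ‖u - e‖ := norm_sub_le _ _
    rw [hue] at h1
    linarith [hfa, hδb]
  have hvup : ‖v‖ ≤ 2 * ‖e‖ := by
    have h1 : ‖v‖ ≤ ‖e‖ + ‖v - e‖ := by
      calc ‖v‖ = ‖e + (v - e)‖ := by rw [add_sub_cancel]
        _ ≤ ‖e‖ + ‖v - e‖ := norm_add_le _ _
    rw [hve] at h1
    linarith [hfb, hδb]
  have hupos : (0:ℝ) < ‖u‖ := lt_of_lt_of_le (by linarith) hulow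
  have hu0 : u ≠ 0 := norm_pos_iff.mp hupos
  have hvlow : ‖e‖ / 2 ≤ ‖v‖ := by
    have h1 : ‖e‖ ≤ ‖v‖ + ‖v - e‖ := by
      calc ‖e‖ = ‖v - (v - e)‖ := by rw [sub_sub_cancel]
        _ ≤ ‖v‖ + ‖v - e‖ := norm_sub_le _ _
    rw [hve] at h1
    linarith [hfb, hδb]
  have hvpos : (0:ℝ) < ‖v‖ := lt_of_lt_of_le (by linarith) hvlow
  have hv0 : v ≠ 0 := norm_pos_iff.mp hvpos
  set uhat : EuclideanSpace ℝ (Fin n) := ‖u‖⁻¹ • u with huhatdef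
  have huhat1 : ‖uhat‖ = 1 := by rw [huhatdef]; exact norm_smul_inv_norm hu0
  -- direction comparison
  have h3 : ‖uhat - ehat‖ ≤ 4 * δ / ‖e‖ := by
    have h31 : ‖uhat - ehat‖ ≤ 2 * ‖u - e‖ / ‖u‖ := by
      rw [huhatdef, hehatdef]; exact unit_diff_aux hu0 he0
    refine h31.trans ?_
    rw [div_le_div_iff₀ hupos hE]
    have hue' : ‖u - e‖ < δ := by rw [hue]; exact hfa
    nlinarith [norm_nonneg (u - e), hδ0, hE, hulow, hue']
  -- lower bound for ‖Qe d‖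
  have herr : ‖f b - f a - D (b - a)‖ ≤ η * B := by
    have hdd : dist (b, a) (x₀, x₀) < r := by
      rw [Prod.dist_eq]
      exact max_lt (mem_ball.mp hb) (mem_ball.mp ha)
    have h9 := hr hdd
    exact h9
  set errv : EuclideanSpace ℝ (Fin n) := f b - f a - D (b - a) with herrvdef
  have hdecomp : d = w + errv := by
    rw [hddef, herrvdef, hwdef]; abel
  clear_value D z₀ W e k ehat Qe ε η M δ c u v d B w errv uhat
  have hQed : ε * k / 2 * B ≤ ‖Qe d‖ := by
    have h41 : ‖Qe w‖ ≤ ‖Qe d‖ + ‖Qe errv‖ := by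
      rw [hdecomp, hQadd]
      calc ‖Qe w‖ = ‖(Qe w + Qe errv) - Qe errv‖ := by rw [add_sub_cancel_right]
        _ ≤ ‖Qe w + Qe errv‖ + ‖Qe errv‖ := norm_sub_le _ _
    have h42 : ‖Qe errv‖ ≤ ε * k / 2 * B := by
      refine (hQbound errv).trans ?_
      have h421 : (2:ℝ) * ‖errv‖ ≤ 2 * (η * B) := by linarith [herr]
      refine h421.trans (le_of_eq ?_)
      rw [hηdef]; ring
    have h43 : ε * k * B ≤ ε * ‖w‖ := by
      rw [mul_assoc]
      exact mul_le_mul_of_nonneg_left hwlow hε.le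
    have h44 := hQlow w hwW
    linarith
  -- lower bound for the projected difference
  have hkey : ε * k / 4 * B ≤ ‖d - ⟪uhat, d⟫ • uhat‖ := by
    have hsplit2 : Qe d = (d - ⟪uhat, d⟫ • uhat) +
        ((⟪uhat, d⟫ • uhat : EuclideanSpace ℝ (Fin n)) - ⟪ehat, d⟫ • ehat) := by
      rw [hQapp]; abel
    have h51 : ‖Qe d‖ ≤ ‖d - ⟪uhat, d⟫ • uhat‖ + 2 * ‖uhat - ehat‖ * ‖d‖ := by
      calc ‖Qe d‖ ≤ ‖d - ⟪uhat, d⟫ • uhat‖ +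
            ‖(⟪uhat, d⟫ • uhat : EuclideanSpace ℝ (Fin n)) - ⟪ehat, d⟫ • ehat‖ := by
            rw [hsplit2]; exact norm_add_le _ _
        _ ≤ ‖d - ⟪uhat, d⟫ • uhat‖ + 2 * ‖uhat - ehat‖ * ‖d‖ :=
            add_le_add le_rfl (proj_pert_aux huhat1 hehat)
    have h52 : 2 * ‖uhat - ehat‖ * ‖d‖ ≤ 2 * (4 * δ / ‖e‖) * ((M + η) * B) := by
      have h521 : ‖uhat - ehat‖ * ‖d‖ ≤ (4 * δ / ‖e‖) * ((M + η) * B) := by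
        refine mul_le_mul h3 hdu (norm_nonneg d) ?_
        have : (0:ℝ) < 4 * δ / ‖e‖ := div_pos (by linarith) hE
        linarith
      linarith
    have h53 : 2 * (4 * δ / ‖e‖) * ((M + η) * B) ≤ ε * k / 4 * B := by
      have hδc' : δ * (32 * (M + η)) ≤ ε * k * ‖e‖ :=
        (le_div_iff₀ (by exact mul_pos (by norm_num) hMη)).mp hδc
      have h530 : 2 * (4 * δ / ‖e‖) * (M + η) ≤ ε * k / 4 := by
        rw [show (2:ℝ) * (4 * δ / ‖e‖) * (M + η) = 8 * δ * (M + η) / ‖e‖ by ring,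
          div_le_iff₀ hE]
        nlinarith [hδc']
      calc 2 * (4 * δ / ‖e‖) * ((M + η) * B) = (2 * (4 * δ / ‖e‖) * (M + η)) * B := by ring
        _ ≤ (ε * k / 4) * B := mul_le_mul_of_nonneg_right h530 hB0
    linarith
  -- the sine of the angle
  have hsin' : ‖v - ⟪uhat, v⟫ • uhat‖ = ‖v‖ * Real.sin (angle u v) := by
    rw [huhatdef]; exact sin_angle_eq_aux hu0 hv0
  have hAv : v - ⟪uhat, v⟫ • uhat = d - ⟪uhat, d⟫ • uhat := by
    have hvu : v = u + d := by rw [hvdef, hudef, hddef]; abel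
    have huu : (⟪uhat, u⟫ : ℝ) • uhat = u := by
      have hne : ‖u‖ ≠ 0 := ne_of_gt hupos
      rw [huhatdef, real_inner_smul_left, smul_smul]
      have h8 : ‖u‖⁻¹ * ⟪u, u⟫ * ‖u‖⁻¹ = 1 := by
        rw [real_inner_self_eq_norm_mul_norm]; field_simp
      rw [h8, one_smul]
    rw [hvu, inner_add_right, add_smul, huu]
    abel
  have hEq : Real.sin (angle u v) * ‖v‖ = ‖d - ⟪uhat, d⟫ • uhat‖ := by
    rw [← hAv, hsin']; ring
  -- conclusion
  have hnorm : ‖f a - f b‖ = ‖d‖ := by rw [hddef, norm_sub_rev]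
  rw [hnorm]
  have hfinal : c * ‖d‖ * ‖v‖ ≤ Real.sin (angle u v) * ‖v‖ := by
    rw [hEq]
    calc c * ‖d‖ * ‖v‖ ≤ c * ((M + η) * B) * (2 * ‖e‖) := by
          exact mul_le_mul (mul_le_mul_of_nonneg_left hdu hc0.le) hvup (norm_nonneg v)
            (mul_nonneg hc0.le (mul_nonneg hMη.le hB0))
      _ = ε * k / 4 * B := by
          rw [hcdef]; field_simp; ring
      _ ≤ ‖d - ⟪uhat, d⟫ • uhat‖ := hkey
  have hsinle : c * ‖d‖ ≤ Real.sin (angle u v) :=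
    le_of_mul_le_mul_right (by linarith [hfinal]) hvpos
  exact hsinle.trans (Real.sin_le (angle_nonneg u v))
end

section
/- Let n, m be positive integers with m < n. Let E ⊆ ℝⁿ be ℋᵐ-measurable, let f : ℝᵐ → ℝⁿ be a C¹ embedding, let x₀ ∈ ℝᵐ, set z₀ = f(x₀), and assume: f'(x₀) has rank m, z₀ is an ℋᵐ-density point of E ∩ f(ℝᵐ) (i.e., lim_{r→0} ℋᵐ(E ∩ f(ℝᵐ) ∩ B(z₀,r))/ℋᵐ(f(ℝᵐ) ∩ B(z₀,r)) = 1), and ℋᵐ(E ∩ f(ℝᵐ) ∩ B(z₀, r)) > 0 for all r > 0. Let T = z₀ + f'(x₀)ℝᵐ. Then for every x ∈ ℝⁿ with x ∉ T, the radial projection π_x(E \ {x}) has positive ℋᵐ measure. -/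
open MeasureTheory Metric Set
open scoped ENNReal

open scoped RealInnerProductSpace

section stmt9helpers
variable {F : Type*} [NormedAddCommGroup F] [InnerProductSpace ℝ F]


/-- Orthogonal part bound: removing the `e`-component does not increase the norm. -/
lemma qproj_norm_le (e : F) (he : ‖e‖ = 1) (z : F) : ‖z - ⟪z, e⟫ • e‖ ≤ ‖z‖ := by
  have hee : ⟪e, e⟫ = 1 := by rw [real_inner_self_eq_norm_sq, he, one_pow]
  have horth : ⟪z - ⟪z, e⟫ • e, ⟪z, e⟫ • e⟫ = 0 := by
    rw [inner_sub_left, real_inner_smul_right, real_inner_smul_left,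
      real_inner_smul_right, hee]; ring
  have h0 : ‖⟪z, e⟫ • e‖ = |⟪z, e⟫| := by
    rw [norm_smul, he, mul_one]; rfl
  have h := norm_add_sq_real (z - ⟪z, e⟫ • e) (⟪z, e⟫ • e)
  rw [sub_add_cancel, horth] at h
  nlinarith [norm_nonneg (z - ⟪z, e⟫ • e), norm_nonneg z, sq_abs ⟪z, e⟫, sq_nonneg ⟪z, e⟫]

lemma qproj_sub (e a b : F) :
    (a - b) - ⟪a - b, e⟫ • e = (a - ⟪a, e⟫ • e) - (b - ⟪b, e⟫ • e) := by
  rw [inner_sub_left, sub_smul]; abel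

/-- Comparing projections along two nearby unit directions. -/
lemma qproj_dir_diff (e e₀ w : F) (he : ‖e‖ = 1) (he₀ : ‖e₀‖ = 1) :
    ‖(w - ⟪w, e⟫ • e) - (w - ⟪w, e₀⟫ • e₀)‖ ≤ 2 * ‖w‖ * ‖e - e₀‖ := by
  have h1 : (w - ⟪w, e⟫ • e) - (w - ⟪w, e₀⟫ • e₀)
      = ⟪w, e₀⟫ • (e₀ - e) + (⟪w, e₀ - e⟫) • e := by
    rw [inner_sub_right, sub_smul, smul_sub]; abel
  rw [h1]
  calc ‖⟪w, e₀⟫ • (e₀ - e) + (⟪w, e₀ - e⟫) • e‖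
      ≤ ‖⟪w, e₀⟫ • (e₀ - e)‖ + ‖(⟪w, e₀ - e⟫) • e‖ := norm_add_le _ _
    _ = |⟪w, e₀⟫| * ‖e₀ - e‖ + |⟪w, e₀ - e⟫| * ‖e‖ := by
        rw [norm_smul, norm_smul]; rfl
    _ ≤ (‖w‖ * ‖e₀‖) * ‖e₀ - e‖ + (‖w‖ * ‖e₀ - e‖) * ‖e‖ := by
        apply add_le_add
        · exact mul_le_mul_of_nonneg_right (abs_real_inner_le_norm w e₀) (norm_nonneg _)
        · exact mul_le_mul_of_nonneg_right (abs_real_inner_le_norm w (e₀ - e)) (norm_nonneg _)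
    _ = 2 * ‖w‖ * ‖e - e₀‖ := by
        rw [he, he₀, norm_sub_rev e₀ e]; ring

/-- Difference of normalizations. -/
lemma unit_diff_le (u u₀ : F) (hu : u ≠ 0) (hu₀ : u₀ ≠ 0) :
    ‖‖u‖⁻¹ • u - ‖u₀‖⁻¹ • u₀‖ ≤ 2 * ‖u - u₀‖ / ‖u‖ := by
  have hun : (0:ℝ) < ‖u‖ := norm_pos_iff.2 hu
  have hu₀n : (0:ℝ) < ‖u₀‖ := norm_pos_iff.2 hu₀
  have h1 : ‖u‖⁻¹ • u - ‖u₀‖⁻¹ • u₀ = ‖u‖⁻¹ • (u - u₀) + (‖u‖⁻¹ - ‖u₀‖⁻¹) • u₀ := by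
    rw [smul_sub, sub_smul]; abel
  rw [h1]
  have h2 : ‖(‖u‖⁻¹ - ‖u₀‖⁻¹) • u₀‖ = |‖u‖⁻¹ - ‖u₀‖⁻¹| * ‖u₀‖ := by
    rw [norm_smul]; rfl
  have h3 : |‖u‖⁻¹ - ‖u₀‖⁻¹| * ‖u₀‖ ≤ ‖u - u₀‖ / ‖u‖ := by
    have : ‖u‖⁻¹ - ‖u₀‖⁻¹ = (‖u₀‖ - ‖u‖) / (‖u‖ * ‖u₀‖) := by
      field_simp
    rw [this, abs_div, abs_of_pos (by positivity : (0:ℝ) < ‖u‖ * ‖u₀‖)]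
    rw [div_mul_eq_mul_div, div_le_div_iff₀ (by positivity) hun]
    have h4 : |‖u₀‖ - ‖u‖| ≤ ‖u - u₀‖ := by
      rw [abs_sub_comm]; exact abs_norm_sub_norm_le u u₀
    calc |‖u₀‖ - ‖u‖| * ‖u₀‖ * ‖u‖ ≤ ‖u - u₀‖ * ‖u₀‖ * ‖u‖ := by gcongr
      _ = ‖u - u₀‖ * (‖u‖ * ‖u₀‖) := by ring
  calc ‖‖u‖⁻¹ • (u - u₀) + (‖u‖⁻¹ - ‖u₀‖⁻¹) • u₀‖
      ≤ ‖‖u‖⁻¹ • (u - u₀)‖ + ‖(‖u‖⁻¹ - ‖u₀‖⁻¹) • u₀‖ := norm_add_le _ _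
    _ ≤ ‖u - u₀‖ / ‖u‖ + ‖u - u₀‖ / ‖u‖ := by
        apply add_le_add
        · rw [norm_smul, norm_inv, norm_norm, inv_mul_eq_div]
        · rw [h2]; exact h3
    _ = 2 * ‖u - u₀‖ / ‖u‖ := by ring

/-- Key radial projection lower bound. -/
lemma radial_lower (x y y' : F) (hy : y ≠ x) (hy' : y' ≠ x) :
    ‖(y - y') - ⟪y - y', ‖y - x‖⁻¹ • (y - x)⟫ • (‖y - x‖⁻¹ • (y - x))‖
      ≤ ‖y' - x‖ * ‖‖y - x‖⁻¹ • (y - x) - ‖y' - x‖⁻¹ • (y' - x)‖ := by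
  set u := y - x with hu
  set u' := y' - x with hu'
  have hune : u ≠ 0 := sub_ne_zero.2 hy
  have hu'ne : u' ≠ 0 := sub_ne_zero.2 hy'
  have hun : (0:ℝ) < ‖u‖ := norm_pos_iff.2 hune
  have hu'n : (0:ℝ) < ‖u'‖ := norm_pos_iff.2 hu'ne
  set e := ‖u‖⁻¹ • u with he_def
  have he : ‖e‖ = 1 := by
    rw [he_def, norm_smul, norm_inv, norm_norm, inv_mul_cancel₀ hun.ne']
  set e' := ‖u'‖⁻¹ • u' with he'_def
  have hv : y - y' = u - u' := by rw [hu, hu']; abel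
  have hqu : u - ⟪u, e⟫ • e = 0 := by
    have h1 : ⟪u, e⟫ = ‖u‖ := by
      rw [he_def, real_inner_smul_right, real_inner_self_eq_norm_sq, sq]
      field_simp
    rw [h1, he_def, smul_smul, mul_inv_cancel₀ hun.ne', one_smul, sub_self]
  have h7 : ‖u'‖ • e' = u' := by
    rw [he'_def, smul_smul, mul_inv_cancel₀ hu'n.ne', one_smul]
  have h8 : ⟪e', e⟫ = ‖u'‖⁻¹ * ⟪u', e⟫ := by rw [he'_def, real_inner_smul_left]
  clear_value e e'
  clear he_def he'_def
  have hqu' : u' - ⟪u', e⟫ • e = ‖u'‖ • (e' - ⟪e', e⟫ • e) := by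
    rw [smul_sub, h7, h8, smul_smul, ← mul_assoc, mul_inv_cancel₀ hu'n.ne', one_mul]
  have hq : (y - y') - ⟪y - y', e⟫ • e = -(‖u'‖ • (e' - ⟪e', e⟫ • e)) := by
    rw [hv, qproj_sub e u u', hqu, hqu', zero_sub]
  rw [hq, norm_neg, norm_smul, Real.norm_eq_abs, abs_of_pos hu'n]
  gcongr
  have h6 : e - ⟪e, e⟫ • e = 0 := by
    rw [real_inner_self_eq_norm_sq, he, one_pow, one_smul, sub_self]
  have h5 : e' - ⟪e', e⟫ • e = -((e - e') - ⟪e - e', e⟫ • e) := by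
    rw [qproj_sub e e e', h6, zero_sub, neg_neg]
  rw [h5, norm_neg]
  exact qproj_norm_le e he _

end stmt9helpers

set_option maxHeartbeats 1000000 in
/-- If `z₀ = f(x₀)` is an `ℋᵐ`-density point of `E ∩ f(ℝᵐ)` at which `f'` has rank `m`, and
`E ∩ f(ℝᵐ)` has positive measure in every ball around `z₀`, then for every `x` outside the
affine tangent plane `T = z₀ + f'(x₀)ℝᵐ` the projection `π_x(E \ {x})` has positive `ℋᵐ`
measure. -/
theorem stmt9 {n m : ℕ} (hm : 0 < m) (hmn : m < n)
    (E : Set (EuclideanSpace ℝ (Fin n)))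
    (hE : NullMeasurableSet E (μH[(m : ℝ)] : Measure (EuclideanSpace ℝ (Fin n))))
    (f : EuclideanSpace ℝ (Fin m) → EuclideanSpace ℝ (Fin n)) (hf : IsC1Embedding f)
    (x₀ : EuclideanSpace ℝ (Fin m))
    (hrank : Module.finrank ℝ (LinearMap.range (fderiv ℝ f x₀ : EuclideanSpace ℝ (Fin m) →ₗ[ℝ] EuclideanSpace ℝ (Fin n))) = m)
    (hdensity : Filter.Tendsto
      (fun r : ℝ => μH[(m : ℝ)] (E ∩ Set.range f ∩ ball (f x₀) r) /
        μH[(m : ℝ)] (Set.range f ∩ ball (f x₀) r))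
      (nhdsWithin 0 (Set.Ioi 0)) (nhds 1))
    (hpos : ∀ r > (0 : ℝ), 0 < μH[(m : ℝ)] (E ∩ Set.range f ∩ ball (f x₀) r)) :
    ∀ x : EuclideanSpace ℝ (Fin n),
      x ∉ (fun w => f x₀ + w) ''
        ((LinearMap.range (fderiv ℝ f x₀ : EuclideanSpace ℝ (Fin m) →ₗ[ℝ] EuclideanSpace ℝ (Fin n)) : Submodule ℝ (EuclideanSpace ℝ (Fin n))) :
          Set (EuclideanSpace ℝ (Fin n))) →
      0 < μH[(m : ℝ)] (radialProj x '' (E \ {x})) := by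
  classical
  intro x hx
  set z₀ := f x₀ with hz₀def
  set D := fderiv ℝ f x₀ with hDdef
  set W : Submodule ℝ (EuclideanSpace ℝ (Fin n)) := LinearMap.range (D : EuclideanSpace ℝ (Fin m) →ₗ[ℝ] EuclideanSpace ℝ (Fin n)) with hWdef
  -- basic facts on u₀
  set u₀ := z₀ - x with hu₀def
  have hu₀W : u₀ ∉ (W : Set (EuclideanSpace ℝ (Fin n))) := by
    intro h
    exact hx ⟨-u₀, W.neg_mem h, by simp [hu₀def]⟩
  have hu₀ne : u₀ ≠ 0 := fun h => hu₀W (h ▸ W.zero_mem)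
  have hu₀n : (0:ℝ) < ‖u₀‖ := norm_pos_iff.2 hu₀ne
  set e₀ := ‖u₀‖⁻¹ • u₀ with he₀def
  have he₀ : ‖e₀‖ = 1 := by
    rw [he₀def, norm_smul, norm_inv, norm_norm, inv_mul_cancel₀ hu₀n.ne']
  have he₀W : e₀ ∉ (W : Set (EuclideanSpace ℝ (Fin n))) := by
    intro h
    apply hu₀W
    have h2 := W.smul_mem ‖u₀‖ h
    rwa [he₀def, smul_smul, mul_inv_cancel₀ hu₀n.ne', one_smul] at h2
  -- D is injective, hence antilipschitz
  have hker : LinearMap.ker (D : EuclideanSpace ℝ (Fin m) →ₗ[ℝ] EuclideanSpace ℝ (Fin n)) = ⊥ := by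
    have h1 := LinearMap.finrank_range_add_finrank_ker (D : EuclideanSpace ℝ (Fin m) →ₗ[ℝ]
      EuclideanSpace ℝ (Fin n))
    rw [finrank_euclideanSpace_fin] at h1
    have h2 : Module.finrank ℝ (LinearMap.range ((D : EuclideanSpace ℝ (Fin m) →ₗ[ℝ]
        EuclideanSpace ℝ (Fin n)))) = m := hrank
    rw [h2] at h1
    have h3 : Module.finrank ℝ (LinearMap.ker ((D : EuclideanSpace ℝ (Fin m) →ₗ[ℝ]
        EuclideanSpace ℝ (Fin n)))) = 0 := by omega
    rw [Submodule.finrank_eq_zero] at h3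
    exact h3
  obtain ⟨K₀, hK₀pos, hK₀⟩ := LinearMap.exists_antilipschitzWith
    (D : EuclideanSpace ℝ (Fin m) →ₗ[ℝ] EuclideanSpace ℝ (Fin n)) hker
  set k₀ : ℝ := max (K₀ : ℝ) 1 with hk₀def
  have hk₀pos : (0:ℝ) < k₀ := lt_of_lt_of_le one_pos (le_max_right _ _)
  have hk₀ : ∀ z : EuclideanSpace ℝ (Fin m), ‖z‖ ≤ k₀ * ‖D z‖ := by
    intro z
    have h1 := hK₀.le_mul_dist z 0
    simp only [dist_zero_right, map_zero, LinearMap.coe_coe] at h1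
    calc ‖z‖ ≤ (K₀:ℝ) * ‖D z‖ := h1
      _ ≤ k₀ * ‖D z‖ := by gcongr; exact le_max_left _ _
  -- the projection along e₀ restricted to W is antilipschitz
  have hPq' : ∃ c : ℝ, 0 < c ∧ c ≤ 1 ∧ ∀ w ∈ W, c * ‖w‖ ≤ ‖w - ⟪w, e₀⟫ • e₀‖ := by
    let q₀ : EuclideanSpace ℝ (Fin n) →ₗ[ℝ] EuclideanSpace ℝ (Fin n) :=
      { toFun := fun z => z - ⟪z, e₀⟫ • e₀
        map_add' := fun a b => by simp only [inner_add_left, add_smul]; abel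
        map_smul' := fun c a => by
          simp only [real_inner_smul_left, RingHom.id_apply, smul_sub, smul_smul] }
    let L : W →ₗ[ℝ] EuclideanSpace ℝ (Fin n) := q₀.comp W.subtype
    have hLker : LinearMap.ker L = ⊥ := by
      rw [LinearMap.ker_eq_bot']
      intro w hw
      have h1 : (w : EuclideanSpace ℝ (Fin n)) - ⟪(w : EuclideanSpace ℝ (Fin n)), e₀⟫ • e₀ = 0 :=
        hw
      set c : ℝ := ⟪(w : EuclideanSpace ℝ (Fin n)), e₀⟫ with hcdef
      by_cases hc : c = 0
      · rw [hc, zero_smul, sub_zero] at h1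
        exact Subtype.ext h1
      · exfalso
        apply he₀W
        have h2 : (w : EuclideanSpace ℝ (Fin n)) = c • e₀ := by
          linear_combination (norm := module) h1
        have h3 : e₀ = c⁻¹ • (w : EuclideanSpace ℝ (Fin n)) := by
          rw [h2, smul_smul, inv_mul_cancel₀ hc, one_smul]
        rw [h3]
        exact W.smul_mem _ w.2
    obtain ⟨K₁, hK₁pos, hK₁⟩ := L.exists_antilipschitzWith hLker
    set k₁ : ℝ := max (K₁ : ℝ) 1 with hk₁def
    have hk₁one : (1:ℝ) ≤ k₁ := le_max_right _ _
    have hk₁pos : (0:ℝ) < k₁ := lt_of_lt_of_le one_pos hk₁one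
    refine ⟨k₁⁻¹, inv_pos.2 hk₁pos, inv_le_one_of_one_le₀ hk₁one, ?_⟩
    intro w hw
    have h1 := hK₁.le_mul_dist (⟨w, hw⟩ : W) 0
    simp only [dist_zero_right, map_zero] at h1
    have h2 : ‖(⟨w, hw⟩ : W)‖ = ‖w‖ := rfl
    have h3 : L ⟨w, hw⟩ = w - ⟪w, e₀⟫ • e₀ := rfl
    rw [h2, h3] at h1
    have h4 : ‖w‖ ≤ k₁ * ‖w - ⟪w, e₀⟫ • e₀‖ := by
      calc ‖w‖ ≤ (K₁:ℝ) * ‖w - ⟪w, e₀⟫ • e₀‖ := h1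
        _ ≤ k₁ * ‖w - ⟪w, e₀⟫ • e₀‖ := by gcongr; exact le_max_left _ _
    calc k₁⁻¹ * ‖w‖ ≤ k₁⁻¹ * (k₁ * ‖w - ⟪w, e₀⟫ • e₀‖) :=
          mul_le_mul_of_nonneg_left h4 (inv_pos.2 hk₁pos).le
      _ = ‖w - ⟪w, e₀⟫ • e₀‖ := by
          rw [← mul_assoc, inv_mul_cancel₀ hk₁pos.ne', one_mul]
  obtain ⟨c₁, hc₁pos, hc₁le, hPq⟩ := hPq'
  -- choose ε and the radius r where the derivative is ε-close to D
  set ε : ℝ := c₁ / (8 * k₀) with hεdef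
  have hεpos : (0:ℝ) < ε := by positivity
  have hcont : ContinuousAt (fderiv ℝ f) x₀ := (hf.1.continuous_fderiv one_ne_zero).continuousAt
  obtain ⟨r, hrpos, hr⟩ := Metric.continuousAt_iff.1 hcont ε hεpos
  -- chord estimate on the ball of radius r
  have hdiff : Differentiable ℝ f := hf.1.differentiable one_ne_zero
  have chord : ∀ a ∈ ball x₀ r, ∀ b ∈ ball x₀ r,
      ‖(f a - f b) - D (a - b)‖ ≤ ε * ‖a - b‖ := by
    intro a ha b hb
    have hder : ∀ z ∈ ball x₀ r, HasFDerivWithinAt (fun z => f z - D z)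
        (fderiv ℝ f z - D) (ball x₀ r) z := fun z _ =>
      ((hdiff z).hasFDerivAt.sub D.hasFDerivAt).hasFDerivWithinAt
    have hbound : ∀ z ∈ ball x₀ r, ‖fderiv ℝ f z - D‖ ≤ ε := by
      intro z hz
      have h1 := hr (mem_ball.1 hz)
      rw [dist_eq_norm] at h1
      exact h1.le
    have h2 := (convex_ball x₀ r).norm_image_sub_le_of_norm_hasFDerivWithin_le hder hbound hb ha
    have h3 : (f a - D a) - (f b - D b) = (f a - f b) - D (a - b) := by
      rw [map_sub]; abel
    rw [h3] at h2
    exact h2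
  -- choose δ so that points of range f near z₀ come from the r-ball
  obtain ⟨U, hUopen, hUpre⟩ := hf.2.toIsInducing.isOpen_iff.1 (isOpen_ball (x := x₀) (ε := r))
  have hz₀U : z₀ ∈ U := by
    have h1 : x₀ ∈ f ⁻¹' U := by rw [hUpre]; exact mem_ball_self hrpos
    exact h1
  obtain ⟨δ₂, hδ₂pos, hδ₂⟩ := Metric.isOpen_iff.1 hUopen z₀ hz₀U
  set δ : ℝ := min δ₂ (min (‖u₀‖ / 2) (c₁ * ‖u₀‖ / 32)) with hδdef
  have hδpos : (0:ℝ) < δ := by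
    apply lt_min hδ₂pos
    apply lt_min
    · positivity
    · positivity
  have hδle₂ : δ ≤ δ₂ := min_le_left _ _
  have hδleu : δ ≤ ‖u₀‖ / 2 := le_trans (min_le_right _ _) (min_le_left _ _)
  have hδlec : δ ≤ c₁ * ‖u₀‖ / 32 := le_trans (min_le_right _ _) (min_le_right _ _)
  have hsub : Set.range f ∩ ball z₀ δ ⊆ f '' ball x₀ r := by
    rintro y ⟨⟨a, rfl⟩, hyb⟩
    refine ⟨a, ?_, rfl⟩
    have h1 : f a ∈ U := hδ₂ (mem_ball.2 (lt_of_lt_of_le (mem_ball.1 hyb) hδle₂))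
    have h2 : a ∈ f ⁻¹' U := h1
    rwa [hUpre] at h2
  -- the key bi-Lipschitz estimate
  clear_value z₀ u₀ e₀
  set Kc : ℝ := 6 * ‖u₀‖ / c₁ with hKcdef
  have hKcpos : (0:ℝ) < Kc := by positivity
  have key : ∀ y ∈ Set.range f ∩ ball z₀ δ, ∀ y' ∈ Set.range f ∩ ball z₀ δ,
      dist y y' ≤ Kc * dist (radialProj x y) (radialProj x y') := by
    intro y hy y' hy'
    obtain ⟨a, ha, hfa⟩ := hsub hy
    obtain ⟨b, hb, hfb⟩ := hsub hy'
    subst hfa; subst hfb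
    -- notation
    set u : EuclideanSpace ℝ (Fin n) := f a - x with hudef
    set u' : EuclideanSpace ℝ (Fin n) := f b - x with hu'def
    have hud : ‖u - u₀‖ ≤ δ := by
      have h1 : u - u₀ = f a - z₀ := by rw [hudef, hu₀def]; abel
      rw [h1]
      have := mem_ball.1 hy.2
      rw [dist_eq_norm] at this
      exact this.le
    have hu'd : ‖u' - u₀‖ ≤ δ := by
      have h1 : u' - u₀ = f b - z₀ := by rw [hu'def, hu₀def]; abel
      rw [h1]
      have := mem_ball.1 hy'.2
      rw [dist_eq_norm] at this
      exact this.le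
    have hun : ‖u₀‖ / 2 ≤ ‖u‖ := by
      have h1 := abs_le.1 (abs_norm_sub_norm_le u u₀)
      linarith [h1.1]
    have hu'n : ‖u₀‖ / 2 ≤ ‖u'‖ := by
      have h1 := abs_le.1 (abs_norm_sub_norm_le u' u₀)
      linarith [h1.1]
    have hu'up : ‖u'‖ ≤ 2 * ‖u₀‖ := by
      have h1 : ‖u'‖ - ‖u₀‖ ≤ ‖u' - u₀‖ := norm_sub_norm_le _ _
      linarith
    have hupos : (0:ℝ) < ‖u‖ := lt_of_lt_of_le (by linarith) hun
    have hu'pos : (0:ℝ) < ‖u'‖ := lt_of_lt_of_le (by linarith) hu'n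
    have hane : f a ≠ x := fun h => by
      rw [hudef, h, sub_self, norm_zero] at hupos; exact lt_irrefl 0 hupos
    have hbne : f b ≠ x := fun h => by
      rw [hu'def, h, sub_self, norm_zero] at hu'pos; exact lt_irrefl 0 hu'pos
    -- the chord and its linear approximation
    set w : EuclideanSpace ℝ (Fin n) := D (a - b) with hwdef
    set v : EuclideanSpace ℝ (Fin n) := f a - f b with hvdef
    set err : EuclideanSpace ℝ (Fin n) := v - w with herrdef
    set e : EuclideanSpace ℝ (Fin n) := ‖u‖⁻¹ • u with hedef
    have herr : ‖err‖ ≤ ε * ‖a - b‖ := chord a ha b hb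
    have hab : ‖a - b‖ ≤ k₀ * ‖w‖ := hk₀ (a - b)
    have hwW : w ∈ W := LinearMap.mem_range.2 ⟨a - b, hwdef.symm⟩
    have he : ‖e‖ = 1 := by
      rw [hedef, norm_smul, norm_inv, norm_norm, inv_mul_cancel₀ hupos.ne']
    have hπa : radialProj x (f a) = ‖u‖⁻¹ • u := rfl
    have hπb : radialProj x (f b) = ‖u'‖⁻¹ • u' := rfl
    have hrad2 : ‖v - ⟪v, e⟫ • e‖ ≤ ‖u'‖ *
        ‖radialProj x (f a) - radialProj x (f b)‖ := by
      have h := radial_lower x (f a) (f b) hane hbne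
      rw [hπa, hπb]
      exact h
    have hdba : dist (f a) (f b) = ‖v‖ := by rw [dist_eq_norm, hvdef]
    clear_value u u' w v err e
    have herr2 : ‖err‖ ≤ c₁ / 8 * ‖w‖ := by
      calc ‖err‖ ≤ ε * ‖a - b‖ := herr
        _ ≤ ε * (k₀ * ‖w‖) := by
            apply mul_le_mul_of_nonneg_left hab hεpos.le
        _ = c₁ / 8 * ‖w‖ := by rw [hεdef]; field_simp
    -- direction comparison
    have hee₀ : ‖e - e₀‖ ≤ c₁ / 8 := by
      have h1 : ‖e - e₀‖ ≤ 2 * ‖u - u₀‖ / ‖u‖ := by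
        rw [hedef, he₀def]
        exact unit_diff_le u u₀ (norm_pos_iff.1 hupos) hu₀ne
      have h2 : 2 * ‖u - u₀‖ / ‖u‖ ≤ c₁ / 8 := by
        rw [div_le_iff₀ hupos]
        have h3 : c₁ / 8 * ‖u‖ ≥ c₁ / 8 * (‖u₀‖ / 2) :=
          mul_le_mul_of_nonneg_left hun (by positivity)
        have h4 : c₁ / 8 * (‖u₀‖ / 2) = c₁ * ‖u₀‖ / 16 := by ring
        nlinarith
      linarith
    -- lower bound on the projected chord
    have hq₀w : c₁ * ‖w‖ ≤ ‖w - ⟪w, e₀⟫ • e₀‖ := hPq w hwW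
    have hqew : 3 / 4 * c₁ * ‖w‖ ≤ ‖w - ⟪w, e⟫ • e‖ := by
      have h1 := qproj_dir_diff e e₀ w he he₀
      have h2 : ‖w - ⟪w, e₀⟫ • e₀‖ - ‖w - ⟪w, e⟫ • e‖
          ≤ ‖(w - ⟪w, e⟫ • e) - (w - ⟪w, e₀⟫ • e₀)‖ := by
        rw [norm_sub_rev ((w - ⟪w, e⟫ • e)) _]
        exact norm_sub_norm_le _ _
      have h3 : 2 * ‖w‖ * ‖e - e₀‖ ≤ 2 * ‖w‖ * (c₁ / 8) :=
        mul_le_mul_of_nonneg_left hee₀ (by positivity)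
      linarith
    have hqev : 1 / 2 * c₁ * ‖w‖ ≤ ‖v - ⟪v, e⟫ • e‖ := by
      have h1 : (v - ⟪v, e⟫ • e) - (w - ⟪w, e⟫ • e) = err - ⟪err, e⟫ • e := by
        rw [herrdef, qproj_sub e v w]
      have h2 : ‖(v - ⟪v, e⟫ • e) - (w - ⟪w, e⟫ • e)‖ ≤ ‖err‖ := by
        rw [h1]; exact qproj_norm_le e he err
      have h3 : ‖w - ⟪w, e⟫ • e‖ - ‖v - ⟪v, e⟫ • e‖
          ≤ ‖(v - ⟪v, e⟫ • e) - (w - ⟪w, e⟫ • e)‖ := by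
        rw [norm_sub_rev (v - ⟪v, e⟫ • e) _]
        exact norm_sub_norm_le _ _
      linarith [mul_nonneg hc₁pos.le (norm_nonneg w)]
    have hvw : ‖v‖ ≤ 9 / 8 * ‖w‖ := by
      have h1 : ‖v‖ ≤ ‖w‖ + ‖err‖ := by
        have : v = w + err := by rw [herrdef]; abel
        rw [this]; exact norm_add_le _ _
      have h2 : c₁ / 8 * ‖w‖ ≤ 1 / 8 * ‖w‖ := by
        apply mul_le_mul_of_nonneg_right _ (norm_nonneg w)
        linarith
      linarith
    have hqevv : 1 / 3 * c₁ * ‖v‖ ≤ ‖v - ⟪v, e⟫ • e‖ := by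
      have h1 : c₁ * ‖v‖ ≤ c₁ * (9 / 8 * ‖w‖) := mul_le_mul_of_nonneg_left hvw hc₁pos.le
      linarith [mul_nonneg hc₁pos.le (norm_nonneg w)]
    -- the radial projection lower bound
    have hrad3 : ‖v - ⟪v, e⟫ • e‖ ≤ 2 * ‖u₀‖ *
        ‖radialProj x (f a) - radialProj x (f b)‖ := by
      calc ‖v - ⟪v, e⟫ • e‖ ≤ ‖u'‖ * ‖radialProj x (f a) - radialProj x (f b)‖ := hrad2
        _ ≤ 2 * ‖u₀‖ * ‖radialProj x (f a) - radialProj x (f b)‖ :=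
            mul_le_mul_of_nonneg_right hu'up (norm_nonneg _)
    rw [hdba, dist_eq_norm]
    have hfinal : 1 / 3 * c₁ * ‖v‖ ≤ 2 * ‖u₀‖ *
        ‖radialProj x (f a) - radialProj x (f b)‖ := le_trans hqevv hrad3
    rw [hKcdef]
    rw [div_mul_eq_mul_div, le_div_iff₀ hc₁pos]
    linarith
  -- measure-theoretic conclusion
  set A : Set (EuclideanSpace ℝ (Fin n)) := E ∩ Set.range f ∩ ball z₀ δ with hAdef
  have hApos : 0 < μH[(m : ℝ)] A := hpos δ hδpos
  have hxA : x ∉ ball z₀ δ := by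
    intro hxb
    have h1 : dist x z₀ < δ := mem_ball.1 hxb
    rw [dist_eq_norm, ← norm_neg, neg_sub, ← hu₀def] at h1
    linarith
  have hkey' : ∀ p ∈ A, ∀ q ∈ A, dist p q ≤ Kc * dist (radialProj x p) (radialProj x q) := by
    intro p hp q hq
    exact key p ⟨hp.1.2, hp.2⟩ q ⟨hq.1.2, hq.2⟩
  have hginj : Set.InjOn (radialProj x) A := by
    intro p hp q hq hpq
    have h1 := hkey' p hp q hq
    rw [hpq, dist_self, mul_zero] at h1
    exact dist_le_zero.1 h1
  have hinv : ∀ p ∈ A, Function.invFunOn (radialProj x) A (radialProj x p) = p :=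
    fun p hp => hginj.leftInvOn_invFunOn hp
  have hlip : LipschitzOnWith (Real.toNNReal Kc) (Function.invFunOn (radialProj x) A)
      (radialProj x '' A) := by
    rw [lipschitzOnWith_iff_dist_le_mul]
    rintro p ⟨a, haA, rfl⟩ q ⟨b, hbA, rfl⟩
    rw [hinv a haA, hinv b hbA, Real.coe_toNNReal _ hKcpos.le]
    exact hkey' a haA b hbA
  have himg : Function.invFunOn (radialProj x) A '' (radialProj x '' A) = A :=
    hginj.invFunOn_image Subset.rfl
  have hle := hlip.hausdorffMeasure_image_le (by positivity : (0:ℝ) ≤ (m:ℝ))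
  rw [himg] at hle
  have hgpos : 0 < μH[(m : ℝ)] (radialProj x '' A) := by
    by_contra h
    push_neg at h
    have h0 : μH[(m : ℝ)] (radialProj x '' A) = 0 := le_antisymm h zero_le
    rw [h0, mul_zero] at hle
    exact absurd (lt_of_lt_of_le hApos hle) (lt_irrefl 0)
  refine lt_of_lt_of_le hgpos (measure_mono (Set.image_mono ?_))
  intro p hp
  refine ⟨hp.1.1, ?_⟩
  simp only [Set.mem_singleton_iff]
  intro hpx
  exact hxA (hpx ▸ hp.2)
end
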